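/- arXiv:2003.11086 — 5 statements merged into one kernel-verified Lean document; each statement's English description precedes it below -/
import Mathlib

section
/- Let m ≥ 1 and d be natural numbers, and let a, b : Fin d → ℕ satisfy a(i) ≤ b(i) ≤ 2^m for every i. Then the box B = {x : Fin d → ℕ | ∀ i, a(i) ≤ x(i) < b(i)} can be written as the union of a pairwise disjoint family of at most (2m)^d dyadic boxes of the grid {0, 1, ..., 2^m − 1}^d. -/
/-- The dyadic box of the grid `{0, 1, ..., 2^m - 1}^d` determined, in each coordinate `i`,
by a level `(p i).1` and an index `(p i).2`: the product over `i` of the dyadic intervals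
`{(p i).2 · 2^(p i).1, ..., ((p i).2 + 1) · 2^(p i).1 - 1}`. -/
def dyadicBox {d : ℕ} (p : Fin d → ℕ × ℕ) : Set (Fin d → ℕ) :=
  {x | ∀ i, (p i).2 * 2 ^ (p i).1 ≤ x i ∧ x i < ((p i).2 + 1) * 2 ^ (p i).1}

/-- The dyadic interval determined by a level `p.1` and index `p.2`. -/
def dI (p : ℕ × ℕ) : Set ℕ := Set.Ico (p.2 * 2 ^ p.1) ((p.2 + 1) * 2 ^ p.1)

lemma dI_nonempty (p : ℕ × ℕ) : (dI p).Nonempty := by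
  refine ⟨p.2 * 2 ^ p.1, le_refl _, ?_⟩
  have : 0 < 2 ^ p.1 := Nat.pow_pos (by norm_num)
  nlinarith

lemma Ico_disjoint {a1 b1 a2 b2 : ℕ} (h : b1 ≤ a2) :
    Disjoint (Set.Ico a1 b1) (Set.Ico a2 b2) := by
  rw [Set.disjoint_left]
  rintro x ⟨_, h1⟩ ⟨h2, _⟩
  omega

/-- Decomposition of `[a, (o+1)·2^m)` into dyadic intervals. -/
lemma right_decomp : ∀ m o a, o * 2 ^ m ≤ a → a ≤ (o + 1) * 2 ^ m →
    ∃ s : Finset (ℕ × ℕ), s.card ≤ max 1 m ∧ (o * 2 ^ m < a → s.card ≤ m) ∧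
      (∀ p ∈ s, p.1 ≤ m ∧ o * 2 ^ m ≤ p.2 * 2 ^ p.1 ∧ (p.2 + 1) * 2 ^ p.1 ≤ (o + 1) * 2 ^ m) ∧
      (s : Set (ℕ × ℕ)).Pairwise (Function.onFun Disjoint dI) ∧
      (⋃ p ∈ s, dI p) = Set.Ico a ((o + 1) * 2 ^ m) := by
  intro m
  induction m with
  | zero =>
    intro o a ha hb
    simp only [pow_zero, mul_one] at ha hb ⊢
    rcases Nat.eq_or_lt_of_le ha with h | h
    · refine ⟨{(0, o)}, by simp, by omega, ?_, by rw [Finset.coe_singleton]; exact Set.pairwise_singleton _ _, ?_⟩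
      · simp [dI]
      · simp [dI, ← h]
    · have : a = o + 1 := by omega
      refine ⟨∅, by simp, by simp, by simp, by simp, ?_⟩
      simp [this]
  | succ m ih =>
    intro o a ha hb
    have h2 : (0:ℕ) < 2 ^ m := Nat.pow_pos (by norm_num)
    have e1 : o * 2 ^ (m + 1) = 2 * o * 2 ^ m := by ring
    have e2 : (o + 1) * 2 ^ (m + 1) = (2 * o + 1 + 1) * 2 ^ m := by ring
    have k1 : 2 * o * 2 ^ m + 2 ^ m = (2 * o + 1) * 2 ^ m := by ring
    have k2 : (2 * o + 1) * 2 ^ m + 2 ^ m = (2 * o + 1 + 1) * 2 ^ m := by ring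
    by_cases h : (2 * o + 1) * 2 ^ m ≤ a
    · obtain ⟨s, hc, _, hp, hpw, hu⟩ := ih (2 * o + 1) a h (by omega)
      refine ⟨s, le_trans hc (by omega), fun _ => le_trans hc (by omega), ?_, hpw, by rw [hu, e2]⟩
      intro p hps
      obtain ⟨h1, h2', h3⟩ := hp p hps
      exact ⟨by omega, by omega, by omega⟩
    · by_cases h0 : a = o * 2 ^ (m + 1)
      · refine ⟨{(m + 1, o)}, by simp, by intro _; simp only [Finset.card_singleton]; omega, ?_,
          by rw [Finset.coe_singleton]; exact Set.pairwise_singleton _ _, ?_⟩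
        · simp [dI]
        · simp [dI, h0]
      · have ha' : 2 * o * 2 ^ m < a := by omega
        obtain ⟨s0, _, hc0, hp0, hpw0, hu0⟩ := ih (2 * o) a (by omega) (by omega)
        have hc0' : s0.card ≤ m := hc0 ha'
        have hnot : (m, 2 * o + 1) ∉ s0 := by
          intro hmem
          have := (hp0 _ hmem).2.2
          simp at this
        refine ⟨insert (m, 2 * o + 1) s0, ?_, ?_, ?_, ?_, ?_⟩
        · rw [Finset.card_insert_of_notMem hnot]; omega
        · intro _; rw [Finset.card_insert_of_notMem hnot]; omega
        · intro p hps
          rcases Finset.mem_insert.mp hps with rfl | hps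
          · exact ⟨by omega, by simp; omega, by simp; omega⟩
          · obtain ⟨h1, h2', h3⟩ := hp0 p hps
            exact ⟨by omega, by omega, by omega⟩
        · rw [Finset.coe_insert]
          apply Set.Pairwise.insert hpw0
          intro q hqs _
          have hq := (hp0 q hqs).2.2
          have hd : Disjoint (dI q) (dI (m, 2 * o + 1)) := by
            rcases q with ⟨l, j⟩
            exact Ico_disjoint (by simp at hq ⊢; omega)
          exact ⟨hd.symm, hd⟩
        · rw [Finset.set_biUnion_insert, hu0]
          have : dI (m, 2 * o + 1) = Set.Ico ((2 * o + 1) * 2 ^ m) ((2 * o + 1 + 1) * 2 ^ m) := rfl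
          rw [this, Set.union_comm, Set.Ico_union_Ico_eq_Ico (by omega) (by omega), e2]

/-- Decomposition of `[o·2^m, b)` into dyadic intervals. -/
lemma left_decomp : ∀ m o b, o * 2 ^ m ≤ b → b ≤ (o + 1) * 2 ^ m →
    ∃ s : Finset (ℕ × ℕ), s.card ≤ max 1 m ∧ (b < (o + 1) * 2 ^ m → s.card ≤ m) ∧
      (∀ p ∈ s, p.1 ≤ m ∧ o * 2 ^ m ≤ p.2 * 2 ^ p.1 ∧ (p.2 + 1) * 2 ^ p.1 ≤ (o + 1) * 2 ^ m) ∧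
      (s : Set (ℕ × ℕ)).Pairwise (Function.onFun Disjoint dI) ∧
      (⋃ p ∈ s, dI p) = Set.Ico (o * 2 ^ m) b := by
  intro m
  induction m with
  | zero =>
    intro o b ha hb
    simp only [pow_zero, mul_one] at ha hb ⊢
    rcases Nat.eq_or_lt_of_le ha with h | h
    · refine ⟨∅, by simp, by simp, by simp, by simp, ?_⟩
      simp [← h]
    · have hbe : b = o + 1 := by omega
      refine ⟨{(0, o)}, by simp, by omega, ?_, by rw [Finset.coe_singleton]; exact Set.pairwise_singleton _ _, ?_⟩
      · simp [dI]
      · simp [dI, hbe]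
  | succ m ih =>
    intro o b ha hb
    have h2 : (0:ℕ) < 2 ^ m := Nat.pow_pos (by norm_num)
    have e1 : o * 2 ^ (m + 1) = 2 * o * 2 ^ m := by ring
    have e2 : (o + 1) * 2 ^ (m + 1) = (2 * o + 1 + 1) * 2 ^ m := by ring
    have k1 : 2 * o * 2 ^ m + 2 ^ m = (2 * o + 1) * 2 ^ m := by ring
    have k2 : (2 * o + 1) * 2 ^ m + 2 ^ m = (2 * o + 1 + 1) * 2 ^ m := by ring
    by_cases h : b ≤ (2 * o + 1) * 2 ^ m
    · obtain ⟨s, hc, _, hp, hpw, hu⟩ := ih (2 * o) b (by omega) h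
      refine ⟨s, le_trans hc (by omega), fun _ => le_trans hc (by omega), ?_, hpw, by rw [hu, e1]⟩
      intro p hps
      obtain ⟨h1, h2', h3⟩ := hp p hps
      exact ⟨by omega, by omega, by omega⟩
    · by_cases h0 : b = (o + 1) * 2 ^ (m + 1)
      · refine ⟨{(m + 1, o)}, by simp, by intro _; simp only [Finset.card_singleton]; omega, ?_,
          by rw [Finset.coe_singleton]; exact Set.pairwise_singleton _ _, ?_⟩
        · simp [dI]
        · simp [dI, h0]
      · have hb' : b < (2 * o + 1 + 1) * 2 ^ m := by omega
        obtain ⟨s1, _, hc1, hp1, hpw1, hu1⟩ := ih (2 * o + 1) b (by omega) (by omega)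
        have hc1' : s1.card ≤ m := hc1 hb'
        have hnot : (m, 2 * o) ∉ s1 := by
          intro hmem
          have := (hp1 _ hmem).2.1
          simp at this
        refine ⟨insert (m, 2 * o) s1, ?_, ?_, ?_, ?_, ?_⟩
        · rw [Finset.card_insert_of_notMem hnot]; omega
        · intro _; rw [Finset.card_insert_of_notMem hnot]; omega
        · intro p hps
          rcases Finset.mem_insert.mp hps with rfl | hps
          · exact ⟨by omega, by simp; omega, by simp; omega⟩
          · obtain ⟨h1, h2', h3⟩ := hp1 p hps
            exact ⟨by omega, by omega, by omega⟩
        · rw [Finset.coe_insert]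
          apply Set.Pairwise.insert hpw1
          intro q hqs _
          have hq := (hp1 q hqs).2.1
          have hd : Disjoint (dI (m, 2 * o)) (dI q) := by
            rcases q with ⟨l, j⟩
            exact Ico_disjoint (by simp at hq ⊢; omega)
          exact ⟨hd, hd.symm⟩
        · rw [Finset.set_biUnion_insert, hu1]
          have : dI (m, 2 * o) = Set.Ico (2 * o * 2 ^ m) ((2 * o + 1) * 2 ^ m) := by
            simp [dI]
          rw [this, Set.Ico_union_Ico_eq_Ico (by omega) (by omega), e1]

/-- 1D decomposition: `[a, b)` inside `[o·2^m, (o+1)·2^m)`. -/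
lemma main1 : ∀ m o a b, o * 2 ^ m ≤ a → a ≤ b → b ≤ (o + 1) * 2 ^ m →
    ∃ s : Finset (ℕ × ℕ), s.card ≤ max 1 (2 * m) ∧
      (∀ p ∈ s, p.1 ≤ m ∧ o * 2 ^ m ≤ p.2 * 2 ^ p.1 ∧ (p.2 + 1) * 2 ^ p.1 ≤ (o + 1) * 2 ^ m) ∧
      (s : Set (ℕ × ℕ)).Pairwise (Function.onFun Disjoint dI) ∧
      (⋃ p ∈ s, dI p) = Set.Ico a b := by
  intro m
  induction m with
  | zero =>
    intro o a b ha hab hb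
    simp only [pow_zero, mul_one] at ha hab hb ⊢
    by_cases h : a = b
    · exact ⟨∅, by simp, by simp, by simp, by simp [h]⟩
    · have ha' : a = o := by omega
      have hb' : b = o + 1 := by omega
      refine ⟨{(0, o)}, by simp, ?_, by rw [Finset.coe_singleton]; exact Set.pairwise_singleton _ _, ?_⟩
      · simp [dI]
      · simp [dI, ha', hb']
  | succ m ih =>
    intro o a b ha hab hb
    have h2 : (0:ℕ) < 2 ^ m := Nat.pow_pos (by norm_num)
    have e1 : o * 2 ^ (m + 1) = 2 * o * 2 ^ m := by ring
    have e2 : (o + 1) * 2 ^ (m + 1) = (2 * o + 1 + 1) * 2 ^ m := by ring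
    have k1 : 2 * o * 2 ^ m + 2 ^ m = (2 * o + 1) * 2 ^ m := by ring
    have k2 : (2 * o + 1) * 2 ^ m + 2 ^ m = (2 * o + 1 + 1) * 2 ^ m := by ring
    by_cases hbc : b ≤ (2 * o + 1) * 2 ^ m
    · obtain ⟨s, hc, hp, hpw, hu⟩ := ih (2 * o) a b (by omega) hab hbc
      refine ⟨s, le_trans hc (by omega), ?_, hpw, hu⟩
      intro p hps
      obtain ⟨h1, h2', h3⟩ := hp p hps
      exact ⟨by omega, by omega, by omega⟩
    · by_cases hac : (2 * o + 1) * 2 ^ m ≤ a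
      · obtain ⟨s, hc, hp, hpw, hu⟩ := ih (2 * o + 1) a b hac hab (by omega)
        refine ⟨s, le_trans hc (by omega), ?_, hpw, hu⟩
        intro p hps
        obtain ⟨h1, h2', h3⟩ := hp p hps
        exact ⟨by omega, by omega, by omega⟩
      · -- a < c < b where c = (2o+1)·2^m
        obtain ⟨s0, hc0, _, hp0, hpw0, hu0⟩ := right_decomp m (2 * o) a (by omega) (by omega)
        obtain ⟨s1, hc1, _, hp1, hpw1, hu1⟩ := left_decomp m (2 * o + 1) b (by omega) (by omega)
        have hcross : ∀ p ∈ s0, ∀ q ∈ s1, Disjoint (dI p) (dI q) := by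
          intro p hps q hqs
          have h3 := (hp0 p hps).2.2
          have h4 := (hp1 q hqs).2.1
          rcases p with ⟨l, j⟩; rcases q with ⟨l', j'⟩
          exact Ico_disjoint (by simp at h3 h4 ⊢; omega)
        refine ⟨s0 ∪ s1, ?_, ?_, ?_, ?_⟩
        · calc (s0 ∪ s1).card ≤ s0.card + s1.card := Finset.card_union_le _ _
            _ ≤ max 1 m + max 1 m := by omega
            _ ≤ max 1 (2 * (m + 1)) := by omega
        · intro p hps
          rcases Finset.mem_union.mp hps with hps | hps
          · obtain ⟨h1, h2', h3⟩ := hp0 p hps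
            exact ⟨by omega, by omega, by omega⟩
          · obtain ⟨h1, h2', h3⟩ := hp1 p hps
            exact ⟨by omega, by omega, by omega⟩
        · intro p hps q hqs hne
          simp only [Finset.coe_union, Set.mem_union, Finset.mem_coe] at hps hqs
          rcases hps with hps | hps <;> rcases hqs with hqs | hqs
          · exact hpw0 hps hqs hne
          · exact hcross p hps q hqs
          · exact (hcross q hqs p hps).symm
          · exact hpw1 hps hqs hne
        · rw [Finset.set_biUnion_union, hu0, hu1,
            Set.Ico_union_Ico_eq_Ico (by omega) (by omega)]

/-- Any axis-aligned box `{x | ∀ i, a i ≤ x i < b i}` with `a i ≤ b i ≤ 2^m` for all `i`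
is the union of a pairwise disjoint family of at most `(2m)^d` dyadic boxes of the grid
`{0, 1, ..., 2^m - 1}^d`. -/
theorem box_eq_disjoint_union_of_dyadic_boxes
    (m d : ℕ) (hm : 1 ≤ m) (a b : Fin d → ℕ)
    (hab : ∀ i, a i ≤ b i) (hb : ∀ i, b i ≤ 2 ^ m) :
    ∃ t : Finset (Fin d → ℕ × ℕ),
      t.card ≤ (2 * m) ^ d ∧
      (∀ p ∈ t, ∀ i, (p i).1 ≤ m ∧ (p i).2 < 2 ^ (m - (p i).1)) ∧
      (t : Set (Fin d → ℕ × ℕ)).Pairwise (fun p q => Disjoint (dyadicBox p) (dyadicBox q)) ∧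
      (⋃ p ∈ t, dyadicBox p) = {x : Fin d → ℕ | ∀ i, a i ≤ x i ∧ x i < b i} := by
  have H : ∀ i : Fin d, ∃ s : Finset (ℕ × ℕ), s.card ≤ max 1 (2 * m) ∧
      (∀ p ∈ s, p.1 ≤ m ∧ 0 * 2 ^ m ≤ p.2 * 2 ^ p.1 ∧ (p.2 + 1) * 2 ^ p.1 ≤ (0 + 1) * 2 ^ m) ∧
      (s : Set (ℕ × ℕ)).Pairwise (Function.onFun Disjoint dI) ∧
      (⋃ p ∈ s, dI p) = Set.Ico (a i) (b i) := by
    intro i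
    exact main1 m 0 (a i) (b i) (by simp) (hab i) (by simpa using hb i)
  choose s hcard hprop hpw hunion using H
  refine ⟨Fintype.piFinset s, ?_, ?_, ?_, ?_⟩
  · rw [Fintype.card_piFinset]
    calc ∏ i, (s i).card ≤ ∏ _i : Fin d, (2 * m) := by
          apply Finset.prod_le_prod'
          intro i _
          have := hcard i
          omega
      _ = (2 * m) ^ d := by simp [Finset.prod_const]
  · intro p hp i
    have hpi : p i ∈ s i := (Fintype.mem_piFinset.mp hp) i
    obtain ⟨h1, _, h3⟩ := hprop i (p i) hpi
    refine ⟨h1, ?_⟩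
    have he : 2 ^ m = 2 ^ (m - (p i).1) * 2 ^ (p i).1 := by
      rw [← pow_add]
      congr 1
      omega
    have h2pos : (0:ℕ) < 2 ^ (p i).1 := Nat.pow_pos (by norm_num)
    have : ((p i).2 + 1) * 2 ^ (p i).1 ≤ 2 ^ (m - (p i).1) * 2 ^ (p i).1 := by
      rw [← he]; simpa using h3
    have := Nat.le_of_mul_le_mul_right this h2pos
    omega
  · intro p hp q hq hne
    simp only [Finset.mem_coe, Fintype.mem_piFinset] at hp hq
    have : ∃ i, p i ≠ q i := by
      by_contra hc
      push_neg at hc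
      exact hne (funext hc)
    obtain ⟨i, hi⟩ := this
    have hd : Disjoint (dI (p i)) (dI (q i)) := hpw i (hp i) (hq i) hi
    rw [Set.disjoint_left]
    intro x hxp hxq
    have h1 : x i ∈ dI (p i) := ⟨(hxp i).1, (hxp i).2⟩
    have h2 : x i ∈ dI (q i) := ⟨(hxq i).1, (hxq i).2⟩
    exact Set.disjoint_left.mp hd h1 h2
  · ext x
    simp only [Set.mem_iUnion, Set.mem_setOf_eq, Fintype.mem_piFinset]
    constructor
    · rintro ⟨p, hp, hx⟩
      intro i
      have : x i ∈ ⋃ q ∈ s i, dI q := Set.mem_biUnion (hp i) ⟨(hx i).1, (hx i).2⟩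
      rw [hunion i] at this
      exact ⟨this.1, this.2⟩
    · intro hx
      have : ∀ i, ∃ q ∈ s i, x i ∈ dI q := by
        intro i
        have : x i ∈ Set.Ico (a i) (b i) := ⟨(hx i).1, (hx i).2⟩
        rw [← hunion i] at this
        simpa using this
      choose q hq hxq using this
      exact ⟨q, hq, fun i => ⟨(hxq i).1, (hxq i).2⟩⟩
end

section
/- Let m ≥ 1, d, and k be natural numbers. Suppose B₁, ..., B_k are pairwise disjoint boxes (sets of the form {x : Fin d → ℕ | ∀ i, a(i) ≤ x(i) < b(i)} for some a, b : Fin d → ℕ with a(i) ≤ b(i) ≤ 2^m) whose union is the full grid {0, 1, ..., 2^m − 1}^d. Then there exists a family of at most k·(2m)^d pairwise disjoint dyadic boxes of the grid whose union is the full grid and such that every dyadic box in the family is contained in one of the boxes B₁, ..., B_k. -/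
/-- An axis-aligned box in `ℕ^d` with all vertices bounded by `2^m`:
a set of the form `{x | ∀ i, a i ≤ x i < b i}` with `a i ≤ b i ≤ 2^m` for all `i`. -/
def IsGridBox (m d : ℕ) (B : Set (Fin d → ℕ)) : Prop :=
  ∃ a b : Fin d → ℕ, (∀ i, a i ≤ b i) ∧ (∀ i, b i ≤ 2 ^ m) ∧
    B = {x : Fin d → ℕ | ∀ i, a i ≤ x i ∧ x i < b i}

/-- `p` encodes a legal dyadic box of the grid `{0, 1, ..., 2^m - 1}^d`:
in each coordinate the level is at most `m` and the index is less than `2^(m - level)`. -/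
def IsDyadicIndex (m d : ℕ) (p : Fin d → ℕ × ℕ) : Prop :=
  ∀ i, (p i).1 ≤ m ∧ (p i).2 < 2 ^ (m - (p i).1)


namespace DyadicAux

/-- The dyadic interval encoded by a (level, index) pair. -/
def dI (p : ℕ × ℕ) : Set ℕ := Set.Ico (p.2 * 2 ^ p.1) ((p.2 + 1) * 2 ^ p.1)

/-- Union of the dyadic intervals in a list. -/
def sU (L : List (ℕ × ℕ)) : Set ℕ := ⋃ p ∈ L, dI p

/-- `p` is a legal dyadic interval of `[0, 2^ℓ)`. -/
def valid (ℓ : ℕ) (p : ℕ × ℕ) : Prop := p.1 ≤ ℓ ∧ p.2 < 2 ^ (ℓ - p.1)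

/-- Shift a dyadic interval of `[0,2^ℓ)` to the second half of `[0,2^(ℓ+1))`. -/
def shift (ℓ : ℕ) (p : ℕ × ℕ) : ℕ × ℕ := (p.1, p.2 + 2 ^ (ℓ - p.1))

abbrev PwD (L : List (ℕ × ℕ)) : Prop :=
  L.Pairwise (fun p q => Disjoint (dI p) (dI q))

lemma mem_sU {x : ℕ} {L : List (ℕ × ℕ)} : x ∈ sU L ↔ ∃ p ∈ L, x ∈ dI p := by
  simp [sU]

lemma sU_nil : sU [] = ∅ := by simp [sU]

lemma sU_cons (p : ℕ × ℕ) (L : List (ℕ × ℕ)) : sU (p :: L) = dI p ∪ sU L := by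
  ext x; simp [sU, or_and_right, exists_or]

lemma sU_append (L1 L2 : List (ℕ × ℕ)) : sU (L1 ++ L2) = sU L1 ∪ sU L2 := by
  ext x; simp [mem_sU, List.mem_append, or_and_right, exists_or]

lemma sU_singleton (p : ℕ × ℕ) : sU [p] = dI p := by
  rw [sU_cons, sU_nil, Set.union_empty]

lemma pow_sub_mul {ℓ e : ℕ} (h : e ≤ ℓ) : 2 ^ (ℓ - e) * 2 ^ e = 2 ^ ℓ := by
  rw [← pow_add, Nat.sub_add_cancel h]

lemma image_add_Ico (a b c : ℕ) : (· + c) '' Set.Ico a b = Set.Ico (a + c) (b + c) := by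
  ext x; simp only [Set.mem_image, Set.mem_Ico]; constructor
  · rintro ⟨y, hy, rfl⟩; omega
  · rintro h; exact ⟨x - c, by omega, by omega⟩

lemma dI_shift {ℓ : ℕ} {p : ℕ × ℕ} (h : p.1 ≤ ℓ) :
    dI (shift ℓ p) = (· + 2 ^ ℓ) '' dI p := by
  have h2 : 2 ^ (ℓ - p.1) * 2 ^ p.1 = 2 ^ ℓ := pow_sub_mul h
  have e1 : (p.2 + 2 ^ (ℓ - p.1)) * 2 ^ p.1 = p.2 * 2 ^ p.1 + 2 ^ ℓ := by
    rw [add_mul, h2]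
  have e2 : (p.2 + 2 ^ (ℓ - p.1) + 1) * 2 ^ p.1 = (p.2 + 1) * 2 ^ p.1 + 2 ^ ℓ := by
    rw [add_mul, add_mul, add_mul, h2]; ring
  unfold dI shift
  rw [image_add_Ico]
  show Set.Ico ((p.2 + 2 ^ (ℓ - p.1)) * 2 ^ p.1) ((p.2 + 2 ^ (ℓ - p.1) + 1) * 2 ^ p.1) = _
  rw [e1, e2]

lemma valid_mono {ℓ : ℕ} {p : ℕ × ℕ} (h : valid ℓ p) : valid (ℓ + 1) p := by
  obtain ⟨h1, h2⟩ := h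
  refine ⟨le_trans h1 (Nat.le_succ _), lt_of_lt_of_le h2 ?_⟩
  exact Nat.pow_le_pow_right (by norm_num) (by omega)

lemma valid_shift {ℓ : ℕ} {p : ℕ × ℕ} (h : valid ℓ p) : valid (ℓ + 1) (shift ℓ p) := by
  obtain ⟨h1, h2⟩ := h
  refine ⟨le_trans h1 (Nat.le_succ _), ?_⟩
  show p.2 + 2 ^ (ℓ - p.1) < 2 ^ (ℓ + 1 - p.1)
  have : ℓ + 1 - p.1 = (ℓ - p.1) + 1 := by omega
  rw [this, pow_succ]
  omega

lemma dI_subset {ℓ : ℕ} {p : ℕ × ℕ} (h : valid ℓ p) : dI p ⊆ Set.Ico 0 (2 ^ ℓ) := by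
  obtain ⟨h1, h2⟩ := h
  intro x hx
  obtain ⟨hx1, hx2⟩ := hx
  refine ⟨Nat.zero_le _, lt_of_lt_of_le hx2 ?_⟩
  calc (p.2 + 1) * 2 ^ p.1 ≤ 2 ^ (ℓ - p.1) * 2 ^ p.1 :=
        Nat.mul_le_mul_right _ (by omega)
    _ = 2 ^ ℓ := pow_sub_mul h1

lemma mem_dI_shift {ℓ : ℕ} {p : ℕ × ℕ} (h : p.1 ≤ ℓ) {x : ℕ} (hx : x ∈ dI (shift ℓ p)) :
    2 ^ ℓ ≤ x := by
  rw [dI_shift h] at hx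
  obtain ⟨y, _, rfl⟩ := hx
  exact Nat.le_add_left _ _

lemma disjoint_of_sep {c : ℕ} {A B : Set ℕ} (hA : ∀ x ∈ A, x < c) (hB : ∀ x ∈ B, c ≤ x) :
    Disjoint A B := by
  rw [Set.disjoint_left]
  intro x hxA hxB
  exact absurd (hB x hxB) (not_le.2 (hA x hxA))

lemma pwd_map_shift {ℓ : ℕ} {L : List (ℕ × ℕ)} (hv : ∀ p ∈ L, valid ℓ p) (hp : PwD L) :
    PwD (L.map (shift ℓ)) := by
  rw [PwD, List.pairwise_map]
  refine hp.imp_of_mem ?_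
  intro p q hpmem hqmem hd
  rw [dI_shift (hv p hpmem).1, dI_shift (hv q hqmem).1]
  exact (Set.disjoint_image_iff (add_left_injective _)).2 hd

lemma sU_map_shift {ℓ : ℕ} {L : List (ℕ × ℕ)} (hv : ∀ p ∈ L, valid ℓ p) :
    sU (L.map (shift ℓ)) = (· + 2 ^ ℓ) '' sU L := by
  induction L with
  | nil => simp [sU_nil]
  | cons p L ih =>
    rw [List.map_cons, sU_cons, sU_cons, Set.image_union,
      dI_shift (hv p List.mem_cons_self).1,
      ih (fun q hq => hv q (List.mem_cons_of_mem _ hq))]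

lemma dI_left (ℓ : ℕ) : dI (ℓ, 0) = Set.Ico 0 (2 ^ ℓ) := by
  simp [dI]

lemma dI_right (ℓ : ℕ) : dI (ℓ, 1) = Set.Ico (2 ^ ℓ) (2 ^ (ℓ + 1)) := by
  unfold dI
  have h1 : (1 : ℕ) * 2 ^ ℓ = 2 ^ ℓ := one_mul _
  have h2 : ((1 : ℕ) + 1) * 2 ^ ℓ = 2 ^ (ℓ + 1) := by rw [pow_succ]; ring
  show Set.Ico (1 * 2 ^ ℓ) ((1 + 1) * 2 ^ ℓ) = _
  rw [h1, h2]

lemma valid_self (ℓ : ℕ) : valid ℓ (ℓ, 0) := by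
  refine ⟨le_refl _, ?_⟩
  show 0 < 2 ^ (ℓ - ℓ)
  positivity

lemma valid_left (ℓ : ℕ) : valid (ℓ + 1) (ℓ, 0) := by
  refine ⟨Nat.le_succ _, ?_⟩
  show 0 < 2 ^ (ℓ + 1 - ℓ)
  positivity

lemma valid_right (ℓ : ℕ) : valid (ℓ + 1) (ℓ, 1) := by
  refine ⟨Nat.le_succ _, ?_⟩
  show 1 < 2 ^ (ℓ + 1 - ℓ)
  have : ℓ + 1 - ℓ = 1 := by omega
  rw [this]; norm_num

/-- Decomposition of a strict prefix `[0, c)` of `[0, 2^ℓ)` into at most `ℓ` dyadic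
intervals. -/
lemma prefix_decomp : ∀ ℓ c : ℕ, c < 2 ^ ℓ →
    ∃ L : List (ℕ × ℕ), L.length ≤ ℓ ∧ (∀ p ∈ L, valid ℓ p) ∧ PwD L ∧
      sU L = Set.Ico 0 c := by
  intro ℓ
  induction ℓ with
  | zero =>
    intro c hc
    have : c = 0 := by simpa using hc
    subst this
    exact ⟨[], by simp, by simp, by simp [PwD], by simp [sU_nil]⟩
  | succ ℓ ih =>
    intro c hc
    rcases lt_trichotomy c (2 ^ ℓ) with hlt | heq | hgt
    · obtain ⟨L, h1, h2, h3, h4⟩ := ih c hlt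
      exact ⟨L, by omega, fun p hp => valid_mono (h2 p hp), h3, h4⟩
    · refine ⟨[(ℓ, 0)], by simp, ?_, by simp [PwD], by rw [sU_singleton, dI_left, heq]⟩
      intro p hp; simp at hp; subst hp; exact valid_left ℓ
    · have hc' : c - 2 ^ ℓ < 2 ^ ℓ := by
        have : 2 ^ (ℓ + 1) = 2 ^ ℓ + 2 ^ ℓ := by rw [pow_succ]; ring
        omega
      obtain ⟨L, h1, h2, h3, h4⟩ := ih (c - 2 ^ ℓ) hc'
      refine ⟨(ℓ, 0) :: L.map (shift ℓ), ?_, ?_, ?_, ?_⟩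
      · simp only [List.length_cons, List.length_map]; omega
      · intro p hp
        rcases List.mem_cons.1 hp with h | h
        · subst h; exact valid_left ℓ
        · obtain ⟨q, hq, rfl⟩ := List.mem_map.1 h
          exact valid_shift (h2 q hq)
      · rw [PwD, List.pairwise_cons]
        refine ⟨?_, pwd_map_shift h2 h3⟩
        intro q hq
        obtain ⟨q', hq', rfl⟩ := List.mem_map.1 hq
        refine disjoint_of_sep (c := 2 ^ ℓ) ?_ ?_
        · rw [dI_left]; intro x hx; exact hx.2
        · intro x hx; exact mem_dI_shift (h2 q' hq').1 hx
      · rw [sU_cons, sU_map_shift h2, h4, dI_left, image_add_Ico]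
        have h0 : (0 : ℕ) + 2 ^ ℓ = 2 ^ ℓ := by omega
        have h1' : c - 2 ^ ℓ + 2 ^ ℓ = c := by omega
        rw [h0, h1']
        exact Set.Ico_union_Ico_eq_Ico (Nat.zero_le _) (le_of_lt hgt)

/-- Decomposition of a strict suffix `[a, 2^ℓ)` (with `a > 0`) into at most `ℓ` dyadic
intervals. -/
lemma suffix_decomp : ∀ ℓ a : ℕ, 0 < a → a ≤ 2 ^ ℓ →
    ∃ L : List (ℕ × ℕ), L.length ≤ ℓ ∧ (∀ p ∈ L, valid ℓ p) ∧ PwD L ∧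
      sU L = Set.Ico a (2 ^ ℓ) := by
  intro ℓ
  induction ℓ with
  | zero =>
    intro a ha0 ha
    have : a = 1 := by omega
    subst this
    exact ⟨[], by simp, by simp, by simp [PwD], by simp [sU_nil, Set.Ico_self]⟩
  | succ ℓ ih =>
    intro a ha0 ha
    rcases lt_trichotomy a (2 ^ ℓ) with hlt | heq | hgt
    · obtain ⟨L, h1, h2, h3, h4⟩ := ih a ha0 (le_of_lt hlt)
      refine ⟨(ℓ, 1) :: L, ?_, ?_, ?_, ?_⟩
      · simp only [List.length_cons]; omega
      · intro p hp
        rcases List.mem_cons.1 hp with h | h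
        · subst h; exact valid_right ℓ
        · exact valid_mono (h2 p h)
      · rw [PwD, List.pairwise_cons]
        refine ⟨?_, h3⟩
        intro q hq
        refine (disjoint_of_sep (c := 2 ^ ℓ) ?_ ?_).symm
        · intro x hx; exact (dI_subset (h2 q hq) hx).2
        · rw [dI_right]; intro x hx; exact hx.1
      · rw [sU_cons, dI_right, h4, Set.union_comm]
        exact Set.Ico_union_Ico_eq_Ico (le_of_lt hlt)
          (Nat.pow_le_pow_right (by norm_num) (Nat.le_succ _))
    · refine ⟨[(ℓ, 1)], by simp, ?_, by simp [PwD], by rw [sU_singleton, dI_right, heq]⟩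
      intro p hp; simp at hp; subst hp; exact valid_right ℓ
    · have hpow : 2 ^ (ℓ + 1) = 2 ^ ℓ + 2 ^ ℓ := by rw [pow_succ]; ring
      obtain ⟨L, h1, h2, h3, h4⟩ := ih (a - 2 ^ ℓ) (by omega) (by omega)
      refine ⟨L.map (shift ℓ), ?_, ?_, pwd_map_shift h2 h3, ?_⟩
      · rw [List.length_map]; omega
      · intro p hp
        obtain ⟨q, hq, rfl⟩ := List.mem_map.1 hp
        exact valid_shift (h2 q hq)
      · rw [sU_map_shift h2, h4, image_add_Ico]
        have h1' : a - 2 ^ ℓ + 2 ^ ℓ = a := by omega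
        have h2' : 2 ^ ℓ + 2 ^ ℓ = 2 ^ (ℓ + 1) := hpow.symm
        rw [h1', h2']

/-- Prefix decomposition allowing `c = 2^ℓ`: at most `max 1 ℓ` pieces. -/
lemma prefix_decomp' (ℓ c : ℕ) (hc : c ≤ 2 ^ ℓ) :
    ∃ L : List (ℕ × ℕ), L.length ≤ max 1 ℓ ∧ (∀ p ∈ L, valid ℓ p) ∧ PwD L ∧
      sU L = Set.Ico 0 c := by
  rcases eq_or_lt_of_le hc with heq | hlt
  · refine ⟨[(ℓ, 0)], by simp, ?_, by simp [PwD], by rw [sU_singleton, dI_left, heq]⟩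
    intro p hp; simp at hp; subst hp; exact valid_self ℓ
  · obtain ⟨L, h1, h2, h3, h4⟩ := prefix_decomp ℓ c hlt
    exact ⟨L, le_trans h1 (le_max_right _ _), h2, h3, h4⟩

/-- Suffix decomposition allowing `a = 0`: at most `max 1 ℓ` pieces. -/
lemma suffix_decomp' (ℓ a : ℕ) (ha : a ≤ 2 ^ ℓ) :
    ∃ L : List (ℕ × ℕ), L.length ≤ max 1 ℓ ∧ (∀ p ∈ L, valid ℓ p) ∧ PwD L ∧
      sU L = Set.Ico a (2 ^ ℓ) := by
  rcases Nat.eq_zero_or_pos a with rfl | ha0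
  · refine ⟨[(ℓ, 0)], by simp, ?_, by simp [PwD], by rw [sU_singleton, dI_left]⟩
    intro p hp; simp at hp; subst hp; exact valid_self ℓ
  · obtain ⟨L, h1, h2, h3, h4⟩ := suffix_decomp ℓ a ha0 ha
    exact ⟨L, le_trans h1 (le_max_right _ _), h2, h3, h4⟩

/-- Any interval `[a, b)` with `b ≤ 2^m` decomposes into at most `max 1 (2m)` legal
dyadic intervals of `[0, 2^m)`. -/
lemma interval_decomp : ∀ m a b : ℕ, a ≤ b → b ≤ 2 ^ m →
    ∃ L : List (ℕ × ℕ), L.length ≤ max 1 (2 * m) ∧ (∀ p ∈ L, valid m p) ∧ PwD L ∧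
      sU L = Set.Ico a b := by
  intro m
  induction m with
  | zero =>
    intro a b hab hb
    rcases Nat.eq_or_lt_of_le hab with heq | hlt
    · exact ⟨[], by simp, by simp, by simp [PwD], by rw [sU_nil, heq, Set.Ico_self]⟩
    · have ha : a = 0 := by omega
      have hb1 : b = 1 := by
        have : b ≤ 1 := by simpa using hb
        omega
      subst ha; subst hb1
      refine ⟨[(0, 0)], by simp, ?_, by simp [PwD], ?_⟩
      · intro p hp; simp at hp; subst hp; exact valid_self 0
      · rw [sU_singleton, dI_left]; norm_num
  | succ m ih =>
    intro a b hab hb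
    have hpow : 2 ^ (m + 1) = 2 ^ m + 2 ^ m := by rw [pow_succ]; ring
    by_cases hb2 : b ≤ 2 ^ m
    · obtain ⟨L, h1, h2, h3, h4⟩ := ih a b hab hb2
      exact ⟨L, le_trans h1 (by omega), fun p hp => valid_mono (h2 p hp), h3, h4⟩
    · push_neg at hb2
      by_cases ha2 : 2 ^ m ≤ a
      · obtain ⟨L, h1, h2, h3, h4⟩ := ih (a - 2 ^ m) (b - 2 ^ m) (by omega) (by omega)
        refine ⟨L.map (shift m), ?_, ?_, pwd_map_shift h2 h3, ?_⟩
        · rw [List.length_map]; omega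
        · intro p hp
          obtain ⟨q, hq, rfl⟩ := List.mem_map.1 hp
          exact valid_shift (h2 q hq)
        · rw [sU_map_shift h2, h4, image_add_Ico]
          have h1' : a - 2 ^ m + 2 ^ m = a := by omega
          have h2' : b - 2 ^ m + 2 ^ m = b := by omega
          rw [h1', h2']
      · push_neg at ha2
        obtain ⟨L1, k1, v1, p1, u1⟩ := suffix_decomp' m a (le_of_lt ha2)
        obtain ⟨L2, k2, v2, p2, u2⟩ := prefix_decomp' m (b - 2 ^ m) (by omega)
        refine ⟨L1 ++ L2.map (shift m), ?_, ?_, ?_, ?_⟩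
        · rw [List.length_append, List.length_map]; omega
        · intro p hp
          rcases List.mem_append.1 hp with h | h
          · exact valid_mono (v1 p h)
          · obtain ⟨q, hq, rfl⟩ := List.mem_map.1 h
            exact valid_shift (v2 q hq)
        · rw [PwD, List.pairwise_append]
          refine ⟨p1, pwd_map_shift v2 p2, ?_⟩
          intro p hp q hq
          obtain ⟨q', hq', rfl⟩ := List.mem_map.1 hq
          refine disjoint_of_sep (c := 2 ^ m) ?_ ?_
          · intro x hx; exact (dI_subset (v1 p hp) hx).2
          · intro x hx; exact mem_dI_shift (v2 q' hq').1 hx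
        · rw [sU_append, sU_map_shift v2, u1, u2, image_add_Ico]
          have h0 : (0 : ℕ) + 2 ^ m = 2 ^ m := by omega
          have h1' : b - 2 ^ m + 2 ^ m = b := by omega
          rw [h0, h1']
          exact Set.Ico_union_Ico_eq_Ico (le_of_lt ha2) (le_of_lt hb2)

end DyadicAux

open DyadicAux in
lemma mem_dyadicBox {d : ℕ} {p : Fin d → ℕ × ℕ} {x : Fin d → ℕ} :
    x ∈ dyadicBox p ↔ ∀ i, x i ∈ DyadicAux.dI (p i) := Iff.rfl

/-- If pairwise disjoint grid-aligned boxes `B 1, ..., B k` partition the full grid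
`{0, 1, ..., 2^m - 1}^d`, then there is a family of at most `k·(2m)^d` pairwise disjoint
dyadic boxes whose union is the full grid and each of which is contained in some `B j`. -/
theorem partition_refined_by_dyadic_boxes
    (m d k : ℕ) (hm : 1 ≤ m) (B : Fin k → Set (Fin d → ℕ))
    (hbox : ∀ j, IsGridBox m d (B j))
    (hdisj : Pairwise (fun j j' => Disjoint (B j) (B j')))
    (hcov : (⋃ j, B j) = {x : Fin d → ℕ | ∀ i, x i < 2 ^ m}) :
    ∃ t : Finset (Fin d → ℕ × ℕ),
      t.card ≤ k * (2 * m) ^ d ∧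
      (∀ p ∈ t, IsDyadicIndex m d p) ∧
      (t : Set (Fin d → ℕ × ℕ)).Pairwise (fun p q => Disjoint (dyadicBox p) (dyadicBox q)) ∧
      (⋃ p ∈ t, dyadicBox p) = {x : Fin d → ℕ | ∀ i, x i < 2 ^ m} ∧
      (∀ p ∈ t, ∃ j, dyadicBox p ⊆ B j) := by
  classical
  open DyadicAux in
  choose a b hab hble hBeq using hbox
  choose L hLlen hLval hLpwd hLsU using
    fun j i => DyadicAux.interval_decomp m (a j i) (b j i) (hab j i) (hble j i)
  set T : Fin k → Finset (Fin d → ℕ × ℕ) :=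
    fun j => Fintype.piFinset (fun i => (L j i).toFinset) with hT
  have memT : ∀ j (p : Fin d → ℕ × ℕ), p ∈ T j ↔ ∀ i, p i ∈ L j i := by
    intro j p
    rw [hT, Fintype.mem_piFinset]
    exact forall_congr' fun i => List.mem_toFinset
  have memB : ∀ j (x : Fin d → ℕ), x ∈ B j ↔ ∀ i, x i ∈ Set.Ico (a j i) (b j i) := by
    intro j x
    rw [hBeq j]
    exact Iff.rfl
  have hsub : ∀ j, ∀ p ∈ T j, dyadicBox p ⊆ B j := by
    intro j p hp x hx
    rw [memB]
    intro i
    rw [← hLsU j i]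
    exact DyadicAux.mem_sU.2 ⟨p i, (memT j p).1 hp i, mem_dyadicBox.1 hx i⟩
  refine ⟨Finset.univ.biUnion T, ?_, ?_, ?_, ?_, ?_⟩
  · -- cardinality
    calc (Finset.univ.biUnion T).card ≤ ∑ j : Fin k, (T j).card := Finset.card_biUnion_le
      _ ≤ ∑ _j : Fin k, (2 * m) ^ d := by
          refine Finset.sum_le_sum fun j _ => ?_
          rw [hT]
          rw [Fintype.card_piFinset]
          calc (∏ i : Fin d, (L j i).toFinset.card) ≤ ∏ _i : Fin d, 2 * m := by
                refine Finset.prod_le_prod' fun i _ => ?_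
                have h1 := List.toFinset_card_le (L j i)
                have h2 := hLlen j i
                have h3 : max 1 (2 * m) = 2 * m := max_eq_right (by omega)
                omega
            _ = (2 * m) ^ d := by
                rw [Finset.prod_const, Finset.card_univ, Fintype.card_fin]
      _ = k * (2 * m) ^ d := by
          rw [Finset.sum_const, Finset.card_univ, Fintype.card_fin, smul_eq_mul]
  · -- dyadic legality
    intro p hp
    obtain ⟨j, -, hpj⟩ := Finset.mem_biUnion.1 hp
    exact fun i => hLval j i (p i) ((memT j p).1 hpj i)
  · -- pairwise disjointness
    intro p hp q hq hpq
    rw [Finset.mem_coe, Finset.mem_biUnion] at hp hq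
    obtain ⟨j, -, hpj⟩ := hp
    obtain ⟨j', -, hqj⟩ := hq
    by_cases hjj : j = j'
    · subst hjj
      have hne : ∃ i, p i ≠ q i := by
        by_contra h
        push_neg at h
        exact hpq (funext h)
      obtain ⟨i, hi⟩ := hne
      have hdis : Disjoint (DyadicAux.dI (p i)) (DyadicAux.dI (q i)) :=
        have : Std.Symm (fun p q : ℕ × ℕ => Disjoint (DyadicAux.dI p) (DyadicAux.dI q)) :=
          ⟨fun _ _ h => h.symm⟩
        (hLpwd j i).forall ((memT j p).1 hpj i) ((memT j q).1 hqj i) hi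
      rw [Set.disjoint_left]
      intro x hxp hxq
      exact Set.disjoint_left.1 hdis (mem_dyadicBox.1 hxp i) (mem_dyadicBox.1 hxq i)
    · exact (hdisj hjj).mono (hsub j p hpj) (hsub j' q hqj)
  · -- union is the full grid
    apply Set.Subset.antisymm
    · intro x hx
      obtain ⟨p, hp, hxp⟩ := Set.mem_iUnion₂.1 hx
      obtain ⟨j, -, hpj⟩ := Finset.mem_biUnion.1 hp
      rw [← hcov]
      exact Set.mem_iUnion.2 ⟨j, hsub j p hpj hxp⟩
    · intro x hx
      rw [← hcov] at hx
      obtain ⟨j, hxj⟩ := Set.mem_iUnion.1 hx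
      have hx' : ∀ i, ∃ q ∈ L j i, x i ∈ DyadicAux.dI q := by
        intro i
        refine DyadicAux.mem_sU.1 ?_
        rw [hLsU j i]
        exact (memB j x).1 hxj i
      choose p hp1 hp2 using hx'
      refine Set.mem_iUnion₂.2 ⟨p, ?_, mem_dyadicBox.2 hp2⟩
      exact Finset.mem_biUnion.2 ⟨j, Finset.mem_univ j, (memT j p).2 hp1⟩
  · -- each piece inside some box
    intro p hp
    obtain ⟨j, -, hpj⟩ := Finset.mem_biUnion.1 hp
    exact ⟨j, hsub j p hpj⟩
end

section
/- There exists a universal constant C > 0 with the following property. Let (Ω, P) be a probability space, let σ > 0, and let ε₁, ..., εₙ : Ω → ℝ be independent random variables, each sub-Gaussian with variance proxy σ²; let ε denote the random vector (ε₁, ..., εₙ) in ℝⁿ with the standard inner product. Let S₁, ..., S_M be linear subspaces of ℝⁿ, each of dimension at most r, and let δ ∈ (0, 1). Then with probability at least 1 − δ, for every j ∈ {1, ..., M} and every nonzero v ∈ S_j, |⟨ε, v⟩| ≤ C·σ·√(r + log(M/δ))·‖v‖. -/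
open MeasureTheory ProbabilityTheory RealInnerProductSpace

/-- A real random variable `X` is sub-Gaussian with variance proxy `σ²` if it is centered
and its moment generating function satisfies `E[exp(t X)] ≤ exp(t² σ² / 2)` for all `t`. -/
def IsSubGaussian {Ω : Type*} [MeasurableSpace Ω] (P : Measure Ω) (σ : ℝ) (X : Ω → ℝ) : Prop :=
  Integrable X P ∧ (∫ ω, X ω ∂P) = 0 ∧
    ∀ t : ℝ, Integrable (fun ω => Real.exp (t * X ω)) P ∧
      (∫ ω, Real.exp (t * X ω) ∂P) ≤ Real.exp (t ^ 2 * σ ^ 2 / 2)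

noncomputable def gW (x : ℝ) : ℝ := (Real.sqrt (2 * Real.pi))⁻¹ * Real.exp (-x ^ 2 / 2)

lemma gW_nonneg (x : ℝ) : 0 ≤ gW x :=
  mul_nonneg (inv_nonneg.2 (Real.sqrt_nonneg _)) (Real.exp_pos _).le

lemma gW_eq_shift (a x : ℝ) : gW x * Real.exp (a * x) =
    ((Real.sqrt (2 * Real.pi))⁻¹ * Real.exp (a ^ 2 / 2)) *
      Real.exp (-(1/2 : ℝ) * (x - a) ^ 2) := by
  unfold gW
  rw [mul_assoc, mul_assoc, ← Real.exp_add, ← Real.exp_add]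
  congr 1
  ring

lemma gW_integrable_exp_mul (a : ℝ) :
    Integrable (fun x : ℝ => gW x * Real.exp (a * x)) := by
  have h : Integrable (fun x : ℝ =>
      ((Real.sqrt (2 * Real.pi))⁻¹ * Real.exp (a ^ 2 / 2)) *
        Real.exp (-(1/2 : ℝ) * (x - a) ^ 2)) :=
    (((integrable_exp_neg_mul_sq (by norm_num : (0:ℝ) < 1/2)).comp_sub_right a).const_mul _)
  exact h.congr (by filter_upwards with x using (gW_eq_shift a x).symm)

lemma gW_integral_exp_mul (a : ℝ) :
    ∫ x : ℝ, gW x * Real.exp (a * x) = Real.exp (a ^ 2 / 2) := by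
  simp_rw [gW_eq_shift a]
  rw [integral_const_mul,
    integral_sub_right_eq_self (μ := volume) (fun x => Real.exp (-(1/2:ℝ) * x ^ 2)) a,
    integral_gaussian]
  rw [mul_assoc, mul_comm (Real.exp (a^2/2)), ← mul_assoc]
  have h2 : Real.sqrt (Real.pi / (1/2)) = Real.sqrt (2 * Real.pi) := by
    congr 1; ring
  rw [h2, inv_mul_cancel₀ (by positivity), one_mul]

lemma gW_eq_quarter (x : ℝ) : gW x * Real.exp (x ^ 2 / 4) =
    (Real.sqrt (2 * Real.pi))⁻¹ * Real.exp (-(1/4 : ℝ) * x ^ 2) := by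
  unfold gW
  rw [mul_assoc, ← Real.exp_add]
  congr 2
  ring

lemma gW_integrable_exp_quarter_sq :
    Integrable (fun x : ℝ => gW x * Real.exp (x ^ 2 / 4)) := by
  have h : Integrable (fun x : ℝ =>
      (Real.sqrt (2 * Real.pi))⁻¹ * Real.exp (-(1/4 : ℝ) * x ^ 2)) :=
    (integrable_exp_neg_mul_sq (by norm_num : (0:ℝ) < 1/4)).const_mul _
  exact h.congr (by filter_upwards with x using (gW_eq_quarter x).symm)

lemma gW_integral_exp_quarter_sq :
    ∫ x : ℝ, gW x * Real.exp (x ^ 2 / 4) = Real.sqrt 2 := by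
  simp_rw [gW_eq_quarter]
  rw [integral_const_mul, integral_gaussian, ← Real.sqrt_inv,
    ← Real.sqrt_mul (by positivity)]
  congr 1
  have hpi : (0:ℝ) < Real.pi := Real.pi_pos
  field_simp
  ring

lemma measurable_gW : Measurable gW :=
  measurable_const.mul (((measurable_id.pow_const 2).neg.div_const 2).exp)

lemma orthonormal_sum_sq {n d : ℕ} (B : Fin d → EuclideanSpace ℝ (Fin n))
    (hB : Orthonormal ℝ B) (g : Fin d → ℝ) :
    ∑ i, (∑ k, g k * B k i) ^ 2 = ∑ k, (g k) ^ 2 := by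
  have hu : ∀ i, (∑ k, g k • B k) i = ∑ k, g k * B k i := by
    intro i
    induction (Finset.univ : Finset (Fin d)) using Finset.induction_on with
    | empty => simp
    | insert _ _ h ih => simp_all [Finset.sum_insert h]
  have h1 : (inner ℝ (∑ k, g k • B k) (∑ k, g k • B k) : ℝ) = ∑ i, (∑ k, g k * B k i) ^ 2 := by
    simp only [PiLp.inner_apply, RCLike.inner_apply, starRingEnd_apply, star_trivial, hu]
    exact Finset.sum_congr rfl fun i _ => (sq _).symm
  have h2 : (inner ℝ (∑ k, g k • B k) (∑ k, g k • B k) : ℝ) = ∑ k, (g k) ^ 2 := by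
    rw [hB.inner_sum g g Finset.univ]
    simp [starRingEnd_apply, sq]
  rw [← h1, h2]

lemma subgaussian_linear_comb {Ω : Type} [MeasurableSpace Ω] (P : Measure Ω)
    [IsProbabilityMeasure P] {n : ℕ} {σ : ℝ}
    (ε : Fin n → Ω → ℝ) (hmeas : ∀ i, Measurable (ε i))
    (hind : iIndepFun ε P)
    (hsub : ∀ i, IsSubGaussian P σ (ε i)) (w : Fin n → ℝ) :
    Integrable (fun ω => Real.exp (∑ i, w i * ε i ω)) P ∧
      (∫ ω, Real.exp (∑ i, w i * ε i ω) ∂P) ≤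
        Real.exp (σ ^ 2 * (∑ i, (w i) ^ 2) / 2) := by
  set Y : Fin n → Ω → ℝ := fun i ω => w i * ε i ω with hY
  have hYmeas : ∀ i, Measurable (Y i) := fun i => (hmeas i).const_mul (w i)
  have hYind : iIndepFun Y P :=
    hind.comp (fun i x => w i * x) (fun i => measurable_const_mul (w i))
  have hYint : ∀ i, Integrable (fun ω => Real.exp (1 * Y i ω)) P := by
    intro i
    simpa [hY, one_mul] using ((hsub i).2.2 (w i)).1
  have hsum : ∀ ω, (∑ i, Y i) ω = ∑ i, w i * ε i ω := by
    intro ω; simp [hY, Finset.sum_apply]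
  have hInt : Integrable (fun ω => Real.exp (∑ i, w i * ε i ω)) P := by
    have := hYind.integrable_exp_mul_sum (t := 1) hYmeas
      (s := Finset.univ) (fun i _ => hYint i)
    refine this.congr ?_
    filter_upwards with ω
    rw [one_mul, hsum]
  refine ⟨hInt, ?_⟩
  have hmgf : mgf (∑ i, Y i) P 1 = ∏ i, mgf (Y i) P 1 :=
    hYind.mgf_sum hYmeas Finset.univ
  have heq : (∫ ω, Real.exp (∑ i, w i * ε i ω) ∂P) = mgf (∑ i, Y i) P 1 := by
    unfold mgf
    congr 1 with ω
    simp only [one_mul, hsum]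
  rw [heq, hmgf]
  calc ∏ i, mgf (Y i) P 1 ≤ ∏ i, Real.exp ((w i) ^ 2 * σ ^ 2 / 2) := by
        refine Finset.prod_le_prod (fun i _ => mgf_nonneg) (fun i _ => ?_)
        have h := ((hsub i).2.2 (w i)).2
        unfold mgf
        calc (∫ ω, Real.exp (1 * Y i ω) ∂P) = ∫ ω, Real.exp (w i * ε i ω) ∂P := by
              simp [hY, one_mul]
          _ ≤ Real.exp ((w i) ^ 2 * σ ^ 2 / 2) := h
    _ = Real.exp (σ ^ 2 * (∑ i, (w i) ^ 2) / 2) := by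
        rw [← Real.exp_sum]
        congr 1
        rw [Finset.mul_sum, ← Finset.sum_div]
        congr 1
        exact Finset.sum_congr rfl (fun i _ => by ring)

lemma core_mgf_bound {Ω : Type} [MeasurableSpace Ω] (P : Measure Ω) [IsProbabilityMeasure P]
    {n : ℕ} {σ : ℝ} (hσ : 0 < σ)
    (ε : Fin n → Ω → ℝ) (hmeas : ∀ i, Measurable (ε i))
    (hind : iIndepFun ε P)
    (hsub : ∀ i, IsSubGaussian P σ (ε i))
    {d : ℕ} (B : Fin d → EuclideanSpace ℝ (Fin n)) (hB : Orthonormal ℝ B) :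
    ∫⁻ ω, ENNReal.ofReal (Real.exp ((4 * σ ^ 2)⁻¹ * ∑ k, (∑ i, ε i ω * B k i) ^ 2)) ∂P
      ≤ ENNReal.ofReal (Real.sqrt 2 ^ d) := by
  set X : Fin d → Ω → ℝ := fun k ω => ∑ i, ε i ω * B k i with hXdef
  have hXmeas : ∀ k, Measurable (X k) :=
    fun k => Finset.measurable_sum _ (fun i _ => (hmeas i).mul_const _)
  set c : ℝ := (σ * Real.sqrt 2)⁻¹ with hcdef
  have hs2 : (Real.sqrt 2) ^ 2 = 2 := Real.sq_sqrt (by norm_num)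
  have hc2 : c ^ 2 = (2 * σ ^ 2)⁻¹ := by
    rw [hcdef, inv_pow, mul_pow, hs2]
    congr 1
    ring
  have hc : c ^ 2 / 2 = (4 * σ ^ 2)⁻¹ := by
    rw [hc2, div_eq_mul_inv, ← mul_inv]
    congr 1
    ring
  -- Step 1: pointwise Gaussian-mixture identity
  have hFint : ∀ ω, Integrable (fun g : Fin d → ℝ =>
      ∏ k, (gW (g k) * Real.exp ((c * X k ω) * g k))) :=
    fun ω => Integrable.fintype_prod (f := fun k x => gW x * Real.exp ((c * X k ω) * x))
      (fun k => gW_integrable_exp_mul _)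
  have hpt : ∀ ω, Real.exp ((4 * σ ^ 2)⁻¹ * ∑ k, X k ω ^ 2)
      = ∫ g : Fin d → ℝ, ∏ k, (gW (g k) * Real.exp ((c * X k ω) * g k)) := by
    intro ω
    rw [MeasureTheory.volume_pi]
    rw [MeasureTheory.integral_fintype_prod_eq_prod
      (fun k x => gW x * Real.exp ((c * X k ω) * x))]
    rw [Finset.prod_congr rfl (fun k _ => gW_integral_exp_mul (c * X k ω))]
    rw [← Real.exp_sum]
    congr 1
    rw [Finset.mul_sum]
    refine Finset.sum_congr rfl fun k _ => ?_
    rw [mul_pow, ← hc]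
    ring
  -- Step 2: pass to lintegral and swap
  have hnn : ∀ ω, (0 : (Fin d → ℝ) → ℝ) ≤ᵐ[volume] fun g : Fin d → ℝ =>
      ∏ k, (gW (g k) * Real.exp ((c * X k ω) * g k)) :=
    fun ω => Filter.Eventually.of_forall fun g => by
      simpa using Finset.prod_nonneg (s := Finset.univ)
        (fun (k : Fin d) _ => mul_nonneg (gW_nonneg (g k)) (Real.exp_pos _).le)
  have hmeas2 : Measurable (fun p : Ω × (Fin d → ℝ) =>
      ENNReal.ofReal (∏ k, (gW (p.2 k) * Real.exp ((c * X k p.1) * p.2 k)))) := by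
    refine Measurable.ennreal_ofReal ?_
    refine Finset.measurable_prod _ fun k _ => ?_
    have h1 : Measurable fun p : Ω × (Fin d → ℝ) => p.2 k :=
      (measurable_pi_apply k).comp measurable_snd
    have h2 : Measurable fun p : Ω × (Fin d → ℝ) => X k p.1 := (hXmeas k).comp measurable_fst
    exact (measurable_gW.comp h1).mul ((h2.const_mul c).mul h1).exp
  calc ∫⁻ ω, ENNReal.ofReal (Real.exp ((4 * σ ^ 2)⁻¹ * ∑ k, X k ω ^ 2)) ∂P
      = ∫⁻ ω, ∫⁻ g : Fin d → ℝ, ENNReal.ofReal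
          (∏ k, (gW (g k) * Real.exp ((c * X k ω) * g k))) ∂volume ∂P := by
        refine lintegral_congr fun ω => ?_
        rw [hpt ω, MeasureTheory.ofReal_integral_eq_lintegral_ofReal (hFint ω) (hnn ω)]
    _ = ∫⁻ g : Fin d → ℝ, ∫⁻ ω, ENNReal.ofReal
          (∏ k, (gW (g k) * Real.exp ((c * X k ω) * g k))) ∂P ∂volume :=
        lintegral_lintegral_swap hmeas2.aemeasurable
    _ ≤ ∫⁻ g : Fin d → ℝ, ENNReal.ofReal
          (∏ k, (gW (g k) * Real.exp ((g k) ^ 2 / 4))) ∂volume := by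
        refine lintegral_mono fun g => ?_
        -- rewrite product as const * exp(linear comb)
        set w : Fin n → ℝ := fun i => ∑ k, (c * g k) * B k i with hwdef
        have hexp : ∀ ω, ∏ k, (gW (g k) * Real.exp ((c * X k ω) * g k))
            = (∏ k, gW (g k)) * Real.exp (∑ i, w i * ε i ω) := by
          intro ω
          rw [Finset.prod_mul_distrib, ← Real.exp_sum]
          congr 2
          calc ∑ k, (c * X k ω) * g k
              = ∑ k, ∑ i, ((c * g k) * B k i) * ε i ω := by
                refine Finset.sum_congr rfl fun k _ => ?_
                rw [hXdef]
                simp only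
                rw [Finset.mul_sum, Finset.sum_mul]
                refine Finset.sum_congr rfl fun i _ => ?_
                ring
            _ = ∑ i, w i * ε i ω := by
                rw [Finset.sum_comm]
                refine Finset.sum_congr rfl fun i _ => ?_
                rw [hwdef]
                simp only
                rw [Finset.sum_mul]
          -- end calc
        have hK : (0:ℝ) ≤ ∏ k, gW (g k) := Finset.prod_nonneg fun k _ => gW_nonneg _
        have hsg := subgaussian_linear_comb P ε hmeas hind hsub w
        have hw2 : σ ^ 2 * (∑ i, (w i) ^ 2) / 2 = (∑ k, (g k) ^ 2) / 4 := by
          have := orthonormal_sum_sq B hB (fun k => c * g k)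
          have hsum : ∑ i, (w i) ^ 2 = ∑ k, (c * g k) ^ 2 := by
            rw [hwdef]; exact this
          rw [hsum]
          have : ∑ k, (c * g k) ^ 2 = c ^ 2 * ∑ k, (g k) ^ 2 := by
            rw [Finset.mul_sum]
            exact Finset.sum_congr rfl fun k _ => by ring
          rw [this, hc2]
          field_simp
          ring
        calc ∫⁻ ω, ENNReal.ofReal (∏ k, (gW (g k) * Real.exp ((c * X k ω) * g k))) ∂P
            = ∫⁻ ω, ENNReal.ofReal (∏ k, gW (g k)) *
                ENNReal.ofReal (Real.exp (∑ i, w i * ε i ω)) ∂P := by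
              refine lintegral_congr fun ω => ?_
              rw [hexp ω, ENNReal.ofReal_mul hK]
          _ = ENNReal.ofReal (∏ k, gW (g k)) *
                ∫⁻ ω, ENNReal.ofReal (Real.exp (∑ i, w i * ε i ω)) ∂P :=
              lintegral_const_mul' _ _ ENNReal.ofReal_ne_top
          _ ≤ ENNReal.ofReal (∏ k, gW (g k)) *
                ENNReal.ofReal (Real.exp (σ ^ 2 * (∑ i, (w i) ^ 2) / 2)) := by
              refine mul_le_mul_right ?_ _
              rw [← MeasureTheory.ofReal_integral_eq_lintegral_ofReal hsg.1
                (Filter.Eventually.of_forall fun ω => by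
                  simpa using (Real.exp_pos (∑ i, w i * ε i ω)).le)]
              exact ENNReal.ofReal_le_ofReal hsg.2
          _ = ENNReal.ofReal (∏ k, (gW (g k) * Real.exp ((g k) ^ 2 / 4))) := by
              rw [← ENNReal.ofReal_mul hK, hw2, Finset.prod_mul_distrib, ← Real.exp_sum]
              congr 2
              rw [← Finset.sum_div]
    _ = ENNReal.ofReal (∫ g : Fin d → ℝ, ∏ k, (gW (g k) * Real.exp ((g k) ^ 2 / 4))) := by
        rw [MeasureTheory.volume_pi]
        rw [MeasureTheory.ofReal_integral_eq_lintegral_ofReal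
          (Integrable.fintype_prod (f := fun _ x => gW x * Real.exp (x ^ 2 / 4))
            (fun _ => gW_integrable_exp_quarter_sq))
          (Filter.Eventually.of_forall fun g => by
            simpa using Finset.prod_nonneg (s := Finset.univ)
              (fun (k : Fin d) _ => mul_nonneg (gW_nonneg (g k)) (Real.exp_pos _).le))]
    _ = ENNReal.ofReal (Real.sqrt 2 ^ d) := by
        rw [MeasureTheory.volume_pi]
        rw [MeasureTheory.integral_fintype_prod_eq_pow (ι := Fin d)
          (fun x => gW x * Real.exp (x ^ 2 / 4)), gW_integral_exp_quarter_sq]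
        simp

/-- Union-bound extension of the subspace maximal inequality: with probability `1 - δ`,
independent `σ²`-sub-Gaussian noise has correlation at most
`O(σ√(r + log(M/δ)))·‖v‖` with every nonzero vector `v` in each of `M` subspaces of
dimension at most `r`. -/
theorem subgaussian_union_of_subspaces_correlation_bound :
    ∃ C : ℝ, 0 < C ∧
      ∀ (Ω : Type) (_ : MeasurableSpace Ω) (P : Measure Ω), IsProbabilityMeasure P →
      ∀ (n : ℕ) (σ : ℝ), 0 < σ →
      ∀ (ε : Fin n → Ω → ℝ), (∀ i, Measurable (ε i)) →
        iIndepFun ε P →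
        (∀ i, IsSubGaussian P σ (ε i)) →
      ∀ (M r : ℕ) (S : Fin M → Submodule ℝ (EuclideanSpace ℝ (Fin n))),
        (∀ j, Module.finrank ℝ ↥(S j) ≤ r) →
      ∀ δ : ℝ, δ ∈ Set.Ioo (0 : ℝ) 1 →
        ENNReal.ofReal (1 - δ) ≤
          P {ω | ∀ j, ∀ v ∈ S j, v ≠ 0 →
            |⟪(WithLp.equiv 2 (Fin n → ℝ)).symm (fun i => ε i ω), v⟫| ≤
              C * σ * Real.sqrt (r + Real.log (M / δ)) * ‖v‖} := by
  refine ⟨4, by norm_num, ?_⟩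
  intro Ω mΩ P hP n σ hσ ε hmeas hind hsub M r S hrank δ hδ
  obtain ⟨hδ0, hδ1⟩ := hδ
  by_cases hM : M = 0
  · subst hM
    have huniv : {ω : Ω | ∀ j : Fin 0, ∀ v ∈ S j, v ≠ 0 →
        |⟪(WithLp.equiv 2 (Fin n → ℝ)).symm (fun i => ε i ω), v⟫| ≤
          4 * σ * Real.sqrt ((r:ℕ) + Real.log ((0:ℕ) / δ)) * ‖v‖} = Set.univ :=
      Set.eq_univ_of_forall (fun ω j => j.elim0)
    rw [huniv, measure_univ]
    exact ENNReal.ofReal_le_one.2 (by linarith)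
  · have hMpos : 0 < (M:ℝ) := by exact_mod_cast Nat.pos_of_ne_zero hM
    have hM1 : (1:ℝ) ≤ M := by exact_mod_cast Nat.one_le_iff_ne_zero.2 hM
    set L : ℝ := Real.log (M / δ) with hLdef
    have hMδ1 : (1:ℝ) ≤ (M:ℝ) / δ := by
      rw [le_div_iff₀ hδ0]
      nlinarith
    have hL : 0 ≤ L := Real.log_nonneg hMδ1
    have hrL : (0:ℝ) ≤ (r:ℝ) + L := by positivity
    set s : ℝ := 4 * σ * Real.sqrt ((r:ℝ) + L) with hsdef
    have hs_nonneg : 0 ≤ s := by positivity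
    have hs2 : s ^ 2 = 16 * σ ^ 2 * ((r:ℝ) + L) := by
      rw [hsdef, mul_pow, mul_pow, Real.sq_sqrt hrL]
      ring
    -- data for each subspace
    set D : Fin M → ℕ := fun j => Module.finrank ℝ ↥(S j) with hDdef
    set B : ∀ j : Fin M, Fin (D j) → EuclideanSpace ℝ (Fin n) :=
      fun j k => ((stdOrthonormalBasis ℝ ↥(S j)) k : EuclideanSpace ℝ (Fin n)) with hBdef
    have hBorth : ∀ j, Orthonormal ℝ (B j) := fun j =>
      ((stdOrthonormalBasis ℝ ↥(S j)).orthonormal).comp_linearIsometry (S j).subtypeₗᵢ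
    set X : ∀ j : Fin M, Fin (D j) → Ω → ℝ :=
      fun j k ω => ∑ i, ε i ω * B j k i with hXdef
    have hXmeas : ∀ j k, Measurable (X j k) :=
      fun j k => Finset.measurable_sum _ (fun i _ => (hmeas i).mul_const _)
    set Bad : Fin M → Set Ω := fun j => {ω | s ^ 2 ≤ ∑ k, X j k ω ^ 2} with hBadDef
    have hBadMeas : ∀ j, MeasurableSet (Bad j) := fun j =>
      measurableSet_le measurable_const
        (Finset.measurable_sum _ (fun k _ => (hXmeas j k).pow_const 2))
    -- Chernoff bound for each j
    have hcher : ∀ j, P (Bad j) ≤ ENNReal.ofReal (δ / M) := by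
      intro j
      have hcore := core_mgf_bound P hσ ε hmeas hind hsub (B j) (hBorth j)
      set θ : ℝ := (4 * σ ^ 2)⁻¹ with hθdef
      have hθpos : 0 < θ := by positivity
      have hfmeas : Measurable fun ω =>
          ENNReal.ofReal (Real.exp (θ * ∑ k, X j k ω ^ 2)) :=
        (((Finset.measurable_sum _
          (fun k _ => (hXmeas j k).pow_const 2)).const_mul θ).exp).ennreal_ofReal
      have hmarkov : ENNReal.ofReal (Real.exp (θ * s ^ 2)) * P (Bad j) ≤
          ∫⁻ ω, ENNReal.ofReal (Real.exp (θ * ∑ k, X j k ω ^ 2)) ∂P := by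
        have h := mul_meas_ge_le_lintegral₀ (μ := P) hfmeas.aemeasurable
          (ENNReal.ofReal (Real.exp (θ * s ^ 2)))
        refine le_trans (mul_le_mul_right (measure_mono ?_) _) h
        intro ω hω
        simp only [hBadDef, Set.mem_setOf_eq] at hω ⊢
        exact ENNReal.ofReal_le_ofReal
          (Real.exp_le_exp.2 (mul_le_mul_of_nonneg_left hω hθpos.le))
      have hθs : θ * s ^ 2 = 4 * ((r:ℝ) + L) := by
        rw [hθdef, hs2]
        field_simp
        ring
      have hdm : Real.exp (-L) = δ / M := by
        rw [hLdef, ← Real.log_inv, Real.exp_log (by positivity), inv_div]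
      have hkey : Real.sqrt 2 ^ D j ≤ Real.exp (θ * s ^ 2) * (δ / M) := by
        have hsqrt2 : Real.sqrt 2 ≤ Real.exp 1 := by
          have h2 : (2:ℝ) < Real.exp 1 := by
            have := Real.exp_one_gt_d9
            linarith
          have h22 : Real.sqrt 2 ≤ 2 := by
            nlinarith [Real.sq_sqrt (show (0:ℝ) ≤ 2 by norm_num), Real.sqrt_nonneg 2]
          linarith
        calc Real.sqrt 2 ^ D j ≤ Real.sqrt 2 ^ r :=
              pow_le_pow_right₀ (Real.one_le_sqrt.2 (by norm_num)) (hrank j)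
          _ ≤ Real.exp 1 ^ r := pow_le_pow_left₀ (Real.sqrt_nonneg 2) hsqrt2 r
          _ = Real.exp r := by rw [← Real.exp_nat_mul]; norm_num
          _ ≤ Real.exp (θ * s ^ 2) * (δ / M) := by
              rw [← hdm, ← Real.exp_add, hθs]
              refine Real.exp_le_exp.2 ?_
              have hr0 : (0:ℝ) ≤ (r:ℝ) := Nat.cast_nonneg r
              linarith
      have hmain : ENNReal.ofReal (Real.exp (θ * s ^ 2)) * P (Bad j) ≤
          ENNReal.ofReal (Real.exp (θ * s ^ 2)) * ENNReal.ofReal (δ / M) := by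
        refine le_trans hmarkov (le_trans hcore ?_)
        rw [← ENNReal.ofReal_mul (Real.exp_pos _).le]
        exact ENNReal.ofReal_le_ofReal hkey
      have hne0 : ENNReal.ofReal (Real.exp (θ * s ^ 2)) ≠ 0 :=
        (ENNReal.ofReal_pos.2 (Real.exp_pos _)).ne'
      exact (ENNReal.mul_le_mul_iff_right hne0 ENNReal.ofReal_ne_top).mp hmain
    -- union bound
    have hunion : P (⋃ j, Bad j) ≤ ENNReal.ofReal δ := by
      refine le_trans (measure_iUnion_le _) ?_
      have h1 : ∑' j : Fin M, P (Bad j) ≤ ∑' _j : Fin M, ENNReal.ofReal (δ / M) :=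
        ENNReal.tsum_le_tsum hcher
      refine le_trans h1 (le_of_eq ?_)
      rw [tsum_fintype, Finset.sum_const, Finset.card_univ, Fintype.card_fin, nsmul_eq_mul,
        ← ENNReal.ofReal_natCast M, ← ENNReal.ofReal_mul (Nat.cast_nonneg M)]
      congr 1
      field_simp
    -- inclusion of the complement in the good event
    have hincl : (⋃ j, Bad j)ᶜ ⊆ {ω : Ω | ∀ j, ∀ v ∈ S j, v ≠ 0 →
        |⟪(WithLp.equiv 2 (Fin n → ℝ)).symm (fun i => ε i ω), v⟫| ≤ s * ‖v‖} := by
      intro ω hω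
      simp only [Set.mem_compl_iff, Set.mem_iUnion, not_exists, hBadDef,
        Set.mem_setOf_eq, not_le] at hω
      intro j v hv hv0
      set v' : ↥(S j) := ⟨v, hv⟩ with hv'def
      set a : Fin (D j) → ℝ := fun k => (stdOrthonormalBasis ℝ ↥(S j)).repr v' k with hadef
      have hvsum : v = ∑ k, a k • B j k := by
        have h := (stdOrthonormalBasis ℝ ↥(S j)).sum_repr v'
        have : ((∑ k, a k • (stdOrthonormalBasis ℝ ↥(S j)) k : ↥(S j)) :
            EuclideanSpace ℝ (Fin n)) = v := by rw [h]
        rw [← this]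
        push_cast
        rfl
      have hinner : ⟪(WithLp.equiv 2 (Fin n → ℝ)).symm (fun i => ε i ω), v⟫
          = ∑ k, a k * X j k ω := by
        rw [hvsum, inner_sum]
        refine Finset.sum_congr rfl fun k _ => ?_
        have hBX : ⟪(WithLp.equiv 2 (Fin n → ℝ)).symm (fun i => ε i ω), B j k⟫
            = X j k ω := by
          simp only [hXdef, PiLp.inner_apply, RCLike.inner_apply', starRingEnd_apply,
            star_trivial]
          refine Finset.sum_congr rfl fun i _ => ?_
          congr 1
        rw [real_inner_smul_right, hBX]
      have hnorma : Real.sqrt (∑ k, a k ^ 2) = ‖v‖ := by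
        have h1 : ∑ k, a k ^ 2 = ‖(stdOrthonormalBasis ℝ ↥(S j)).repr v'‖ ^ 2 := by
          rw [EuclideanSpace.norm_eq]
          rw [Real.sq_sqrt (Finset.sum_nonneg fun k _ => sq_nonneg _)]
          exact Finset.sum_congr rfl fun k _ => by rw [Real.norm_eq_abs, sq_abs]
        rw [h1, Real.sqrt_sq (norm_nonneg _), LinearIsometryEquiv.norm_map]
        rfl
      have hXlt : ∑ k, X j k ω ^ 2 < s ^ 2 := hω j
      have hCS : |∑ k, a k * X j k ω| ≤ Real.sqrt (∑ k, a k ^ 2) *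
          Real.sqrt (∑ k, X j k ω ^ 2) := by
        rw [← Real.sqrt_sq_eq_abs, ← Real.sqrt_mul (Finset.sum_nonneg fun k _ => sq_nonneg _)]
        exact Real.sqrt_le_sqrt (Finset.sum_mul_sq_le_sq_mul_sq _ _ _)
      have hXs : Real.sqrt (∑ k, X j k ω ^ 2) ≤ s := by
        rw [← Real.sqrt_sq hs_nonneg]
        exact Real.sqrt_le_sqrt hXlt.le
      rw [hinner]
      calc |∑ k, a k * X j k ω| ≤ Real.sqrt (∑ k, a k ^ 2) *
            Real.sqrt (∑ k, X j k ω ^ 2) := hCS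
        _ = ‖v‖ * Real.sqrt (∑ k, X j k ω ^ 2) := by rw [hnorma]
        _ ≤ ‖v‖ * s := mul_le_mul_of_nonneg_left hXs (norm_nonneg _)
        _ = s * ‖v‖ := mul_comm _ _
    -- conclude
    calc ENNReal.ofReal (1 - δ) = 1 - ENNReal.ofReal δ := by
          rw [← ENNReal.ofReal_one, ← ENNReal.ofReal_sub _ hδ0.le]
      _ ≤ 1 - P (⋃ j, Bad j) := tsub_le_tsub_left hunion 1
      _ = P (⋃ j, Bad j)ᶜ := (prob_compl_eq_one_sub (MeasurableSet.iUnion hBadMeas)).symm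
      _ ≤ P {ω : Ω | ∀ j, ∀ v ∈ S j, v ≠ 0 →
            |⟪(WithLp.equiv 2 (Fin n → ℝ)).symm (fun i => ε i ω), v⟫| ≤ s * ‖v‖} :=
          measure_mono hincl
end

section
/- There exists a universal constant C > 0 with the following property. Let (Ω, P) be a probability space, let σ > 0, let n ≥ 2, and let ε₁, ..., εₙ : Ω → ℝ be independent random variables, each sub-Gaussian with variance proxy σ². Let R₁, ..., R_t be pairwise disjoint subsets of {1, ..., n}; for each j let S_j be a linear subspace of ℝ^{R_j} (the Euclidean space of real functions on R_j) with dim S_j ≤ r; and let f : {1, ..., n} → ℝ be such that the restriction f|_{R_j} lies in S_j for every j. For each j, let f̂_j ∈ S_j be a least-squares fit of (f + ε)|_{R_j} over S_j, i.e., ‖(f + ε)|_{R_j} − f̂_j‖ ≤ ‖(f + ε)|_{R_j} − v‖ for all v ∈ S_j. Then for every δ ∈ (0, 1), with probability at least 1 − δ: Σ_{j=1}^{t} ‖f̂_j − f|_{R_j}‖² ≤ C·σ²·t·(r + log(n/δ)). -/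
open MeasureTheory ProbabilityTheory

/-- The restriction of `g : Fin n → ℝ` to an index set `R`, as a vector of the Euclidean
space of real functions on `R`. -/
noncomputable def restrictTo {n : ℕ} (R : Finset (Fin n)) (g : Fin n → ℝ) : EuclideanSpace ℝ ↥R :=
  (WithLp.equiv 2 (↥R → ℝ)).symm (fun i => g i)


open Metric Set ENNReal Real

lemma net_finset_card_bound {d : ℕ} (F : Finset (EuclideanSpace ℝ (Fin d)))
    (hF1 : ∀ x ∈ F, ‖x‖ = 1)
    (hsep : (F : Set (EuclideanSpace ℝ (Fin d))).Pairwise (fun x y => 1/2 < dist x y)) :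
    F.card ≤ 6 ^ d := by
  have hD : Module.finrank ℝ (EuclideanSpace ℝ (Fin d)) = d := finrank_euclideanSpace_fin
  have hdisj : (F : Set (EuclideanSpace ℝ (Fin d))).PairwiseDisjoint
      (fun x => ball x (1/4)) := by
    intro x hx y hy hxy
    apply ball_disjoint_ball
    have := hsep hx hy hxy
    linarith
  have hsum : ∑ x ∈ F, volume (ball x (1/4)) = volume (⋃ x ∈ F, ball x (1/4)) :=
    (measure_biUnion_finset hdisj fun x _ => measurableSet_ball).symm
  have hsub : (⋃ x ∈ F, ball x (1/4)) ⊆ ball (0 : EuclideanSpace ℝ (Fin d)) (3/2) := by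
    intro y hy
    simp only [mem_iUnion] at hy
    obtain ⟨x, hx, hyx⟩ := hy
    have hx1 := hF1 x hx
    simp only [mem_ball] at hyx ⊢
    calc dist y 0 ≤ dist y x + dist x 0 := dist_triangle _ _ _
      _ < 1/4 + 1 := by rw [dist_zero_right, hx1]; linarith
      _ ≤ 3/2 := by norm_num
  have hball : ∀ x : EuclideanSpace ℝ (Fin d), volume (ball x (1/4)) =
      ENNReal.ofReal ((1/4 : ℝ) ^ d) * volume (ball (0 : EuclideanSpace ℝ (Fin d)) 1) :=
    fun x => by rw [Measure.addHaar_ball_of_pos volume x (by norm_num : (0:ℝ) < 1/4), hD]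
  have hbig : volume (ball (0 : EuclideanSpace ℝ (Fin d)) (3/2)) =
      ENNReal.ofReal ((3/2 : ℝ) ^ d) * volume (ball (0 : EuclideanSpace ℝ (Fin d)) 1) := by
    rw [Measure.addHaar_ball_of_pos volume 0 (by norm_num : (0:ℝ) < 3/2), hD]
  have hVpos : 0 < volume (ball (0 : EuclideanSpace ℝ (Fin d)) 1) :=
    measure_ball_pos _ _ (by norm_num)
  have hVlt : volume (ball (0 : EuclideanSpace ℝ (Fin d)) 1) < ⊤ := measure_ball_lt_top
  have key : ((F.card : ℝ≥0∞) * ENNReal.ofReal ((1/4 : ℝ) ^ d)) *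
        volume (ball (0 : EuclideanSpace ℝ (Fin d)) 1)
      ≤ ENNReal.ofReal ((3/2 : ℝ) ^ d) *
        volume (ball (0 : EuclideanSpace ℝ (Fin d)) 1) := by
    calc ((F.card : ℝ≥0∞) * ENNReal.ofReal ((1/4 : ℝ) ^ d)) * volume (ball (0 : EuclideanSpace ℝ (Fin d)) 1)
        = ∑ _x ∈ F, (ENNReal.ofReal ((1/4 : ℝ) ^ d) * volume (ball (0 : EuclideanSpace ℝ (Fin d)) 1)) := by
          rw [Finset.sum_const, nsmul_eq_mul, mul_assoc]
      _ = ∑ x ∈ F, volume (ball x (1/4)) := by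
          exact Finset.sum_congr rfl fun x _ => (hball x).symm
      _ = volume (⋃ x ∈ F, ball x (1/4)) := hsum
      _ ≤ volume (ball (0 : EuclideanSpace ℝ (Fin d)) (3/2)) := measure_mono hsub
      _ = _ := hbig
  have key2 : (F.card : ℝ≥0∞) * ENNReal.ofReal ((1/4 : ℝ) ^ d)
      ≤ ENNReal.ofReal ((3/2 : ℝ) ^ d) :=
    (ENNReal.mul_le_mul_iff_left hVpos.ne' hVlt.ne).mp key
  have h32 : ENNReal.ofReal ((3/2 : ℝ) ^ d) =
      (6 ^ d : ℕ) * ENNReal.ofReal ((1/4 : ℝ) ^ d) := by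
    rw [← ENNReal.ofReal_natCast, ← ENNReal.ofReal_mul (by positivity)]
    congr 1
    push_cast
    rw [← mul_pow]
    norm_num
  rw [h32] at key2
  have key3 : (F.card : ℝ≥0∞) ≤ (6 ^ d : ℕ) :=
    (ENNReal.mul_le_mul_iff_left (by positivity) ENNReal.ofReal_ne_top).mp key2
  exact_mod_cast key3

lemma exists_net (d : ℕ) :
    ∃ N : Finset (EuclideanSpace ℝ (Fin d)),
      (∀ x ∈ N, ‖x‖ = 1) ∧ N.card ≤ 6 ^ d ∧
      ∀ v : EuclideanSpace ℝ (Fin d), ‖v‖ = 1 → ∃ x ∈ N, ‖v - x‖ ≤ 1 / 2 := by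
  set Sep : Set (Set (EuclideanSpace ℝ (Fin d))) :=
    {A | (∀ x ∈ A, ‖x‖ = 1) ∧ A.Pairwise (fun x y => 1/2 < dist x y)} with hSep
  obtain ⟨M, hM⟩ : ∃ M, Maximal (· ∈ Sep) M := by
    apply zorn_subset
    intro c hc hchain
    refine ⟨⋃₀ c, ⟨?_, ?_⟩, fun s hs => Set.subset_sUnion_of_mem hs⟩
    · rintro x ⟨A, hA, hxA⟩
      exact (hc hA).1 x hxA
    · intro x hx y hy hxy
      obtain ⟨A, hA, hxA⟩ := hx
      obtain ⟨B, hB, hyB⟩ := hy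
      rcases hchain.total hA hB with h | h
      · exact (hc hB).2 (h hxA) hyB hxy
      · exact (hc hA).2 hxA (h hyB) hxy
  have hcard : ∀ F : Finset (EuclideanSpace ℝ (Fin d)), ↑F ⊆ M → F.card ≤ 6 ^ d := by
    intro F hFM
    exact net_finset_card_bound F (fun x hx => hM.prop.1 x (hFM hx))
      (hM.prop.2.mono hFM)
  have hMfin : M.Finite := by
    by_contra hinf
    obtain ⟨F, hFM, hFcard⟩ := Set.Infinite.exists_subset_card_eq hinf (6 ^ d + 1)
    have := hcard F hFM
    omega
  refine ⟨hMfin.toFinset, ?_, ?_, ?_⟩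
  · intro x hx
    exact hM.prop.1 x (hMfin.mem_toFinset.mp hx)
  · exact hcard _ (by simp)
  · intro v hv
    by_cases hvM : v ∈ M
    · exact ⟨v, hMfin.mem_toFinset.mpr hvM, by simp⟩
    by_contra hno
    push_neg at hno
    have hfar : ∀ x ∈ M, 1/2 < dist v x := by
      intro x hx
      have := hno x (hMfin.mem_toFinset.mpr hx)
      rw [dist_eq_norm]
      linarith
    have hins : insert v M ∈ Sep := by
      constructor
      · rintro x (rfl | hx)
        · exact hv
        · exact hM.prop.1 x hx
      · apply Set.Pairwise.insert hM.prop.2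
        intro x hx _
        refine ⟨hfar x hx, ?_⟩
        rw [dist_comm]
        exact hfar x hx
    have := hM.2 hins (Set.subset_insert v M) (Set.mem_insert v M)
    exact hvM this

lemma exists_net_subspace {ι : Type*} [Fintype ι] (S : Submodule ℝ (EuclideanSpace ℝ ι)) :
    ∃ N : Finset (EuclideanSpace ℝ ι),
      (∀ x ∈ N, x ∈ S ∧ ‖x‖ = 1) ∧ N.card ≤ 6 ^ (Module.finrank ℝ ↥S) ∧
      ∀ v ∈ S, ‖v‖ = 1 → ∃ x ∈ N, ‖v - x‖ ≤ 1 / 2 := by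
  classical
  set d := Module.finrank ℝ ↥S with hd
  let L : ↥S ≃ₗᵢ[ℝ] EuclideanSpace ℝ (Fin d) := (stdOrthonormalBasis ℝ ↥S).repr
  obtain ⟨N₀, hN₀norm, hN₀card, hN₀cov⟩ := exists_net d
  refine ⟨N₀.image (fun x => ((L.symm x : ↥S) : EuclideanSpace ℝ ι)), ?_, ?_, ?_⟩
  · intro x hx
    simp only [Finset.mem_image] at hx
    obtain ⟨x₀, hx₀, rfl⟩ := hx
    refine ⟨SetLike.coe_mem _, ?_⟩
    rw [Submodule.norm_coe, L.symm.norm_map]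
    exact hN₀norm x₀ hx₀
  · exact le_trans (Finset.card_image_le) hN₀card
  · intro v hvS hv
    have hnorm : ‖L ⟨v, hvS⟩‖ = 1 := by rw [L.norm_map]; exact hv
    obtain ⟨x₀, hx₀, hclose⟩ := hN₀cov (L ⟨v, hvS⟩) hnorm
    refine ⟨((L.symm x₀ : ↥S) : EuclideanSpace ℝ ι),
      Finset.mem_image_of_mem _ hx₀, ?_⟩
    have : v - ((L.symm x₀ : ↥S) : EuclideanSpace ℝ ι) =
        ((⟨v, hvS⟩ - L.symm x₀ : ↥S) : EuclideanSpace ℝ ι) := rfl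
    rw [this, Submodule.norm_coe, ← L.norm_map, map_sub, L.apply_symm_apply]
    exact hclose


lemma subgaussian_tail {Ω : Type} [MeasurableSpace Ω] (P : Measure Ω) [IsProbabilityMeasure P]
    {n : ℕ} {σ : ℝ} (hσ : 0 < σ) {ε : Fin n → Ω → ℝ} (hmeas : ∀ i, Measurable (ε i))
    (hind : iIndepFun ε P) (hsub : ∀ i, IsSubGaussian P σ (ε i))
    (R : Finset (Fin n)) (c : Fin n → ℝ) (hc : ∑ i ∈ R, c i ^ 2 ≤ 1)
    {s : ℝ} (hs : 0 ≤ s) :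
    P {ω | s ≤ ∑ i ∈ R, c i * ε i ω} ≤ ENNReal.ofReal (Real.exp (-(s ^ 2) / (2 * σ ^ 2))) := by
  set lam := s / σ ^ 2 with hlam
  have hlam0 : 0 ≤ lam := div_nonneg hs (by positivity)
  set X : Fin n → Ω → ℝ := fun i ω => c i * ε i ω with hX
  have hXmeas : ∀ i, Measurable (X i) := fun i => (hmeas i).const_mul (c i)
  have hXind : iIndepFun X P :=
    hind.comp (fun i => (c i * ·)) (fun i => measurable_const.mul measurable_id)
  have hXint : ∀ i, Integrable (fun ω => Real.exp (lam * X i ω)) P := by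
    intro i
    have := ((hsub i).2.2 (lam * c i)).1
    simpa [hX, mul_assoc] using this
  have hintsum : Integrable (fun ω => Real.exp (lam * (∑ i ∈ R, X i) ω)) P :=
    hXind.integrable_exp_mul_sum hXmeas (fun i _ => hXint i)
  have hcher := measure_ge_le_exp_mul_mgf (μ := P) (X := ∑ i ∈ R, X i) s hlam0 hintsum
  have hmgf : mgf (∑ i ∈ R, X i) P lam ≤ Real.exp (lam ^ 2 * σ ^ 2 / 2) := by
    rw [hXind.mgf_sum hXmeas]
    calc ∏ i ∈ R, mgf (X i) P lam
        ≤ ∏ i ∈ R, Real.exp ((lam * c i) ^ 2 * σ ^ 2 / 2) := by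
          apply Finset.prod_le_prod
          · intro i _; exact mgf_nonneg
          · intro i _
            have h2 := ((hsub i).2.2 (lam * c i)).2
            have : mgf (X i) P lam = ∫ ω, Real.exp ((lam * c i) * ε i ω) ∂P := by
              simp [mgf, hX, mul_assoc]
            rw [this]
            exact h2
      _ = Real.exp (∑ i ∈ R, (lam * c i) ^ 2 * σ ^ 2 / 2) := by
          rw [Real.exp_sum]
      _ ≤ Real.exp (lam ^ 2 * σ ^ 2 / 2) := by
          apply Real.exp_le_exp.mpr
          have : ∑ i ∈ R, (lam * c i) ^ 2 * σ ^ 2 / 2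
              = (∑ i ∈ R, c i ^ 2) * (lam ^ 2 * σ ^ 2 / 2) := by
            rw [Finset.sum_mul]
            apply Finset.sum_congr rfl
            intro i _; ring
          rw [this]
          exact mul_le_of_le_one_left (by positivity) hc
  have hfinal : (P {ω | s ≤ (∑ i ∈ R, X i) ω}).toReal ≤ Real.exp (-(s ^ 2) / (2 * σ ^ 2)) := by
    refine hcher.trans ?_
    calc Real.exp (-lam * s) * mgf (∑ i ∈ R, X i) P lam
        ≤ Real.exp (-lam * s) * Real.exp (lam ^ 2 * σ ^ 2 / 2) :=
          mul_le_mul_of_nonneg_left hmgf (Real.exp_nonneg _)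
      _ = Real.exp (-lam * s + lam ^ 2 * σ ^ 2 / 2) := (Real.exp_add _ _).symm
      _ = Real.exp (-(s ^ 2) / (2 * σ ^ 2)) := by
          congr 1
          rw [hlam]
          field_simp
          ring
  have hset : {ω | s ≤ ∑ i ∈ R, c i * ε i ω} = {ω | s ≤ (∑ i ∈ R, X i) ω} := by
    ext ω
    simp [hX]
  rw [hset, ← ENNReal.ofReal_toReal (measure_ne_top P _)]
  exact ENNReal.ofReal_le_ofReal hfinal


set_option maxHeartbeats 2000000 in
/-- Lemma 2.6 of the paper: with probability `1 - δ`, the total squared error of the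
piecewise least-squares fits, over `t` disjoint index sets on each of which the true
function lies in a subspace of dimension at most `r`, is at most `C·σ²·t·(r + log(n/δ))`. -/
theorem piecewise_least_squares_error_bound :
    ∃ C : ℝ, 0 < C ∧
      ∀ (Ω : Type) (_ : MeasurableSpace Ω) (P : Measure Ω), IsProbabilityMeasure P →
      ∀ (n : ℕ) (σ : ℝ), 0 < σ →
      ∀ (ε : Fin n → Ω → ℝ), (∀ i, Measurable (ε i)) →
        iIndepFun ε P →
        (∀ i, IsSubGaussian P σ (ε i)) →
      ∀ (t r : ℕ) (R : Fin t → Finset (Fin n)),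
        Pairwise (fun j j' => Disjoint (R j) (R j')) →
      ∀ (S : ∀ j, Submodule ℝ (EuclideanSpace ℝ ↥(R j))),
        (∀ j, Module.finrank ℝ ↥(S j) ≤ r) →
      ∀ (f : Fin n → ℝ), (∀ j, restrictTo (R j) f ∈ S j) →
      ∀ (fhat : ∀ j, Ω → EuclideanSpace ℝ ↥(R j)),
        (∀ j ω, fhat j ω ∈ S j) →
        (∀ j ω, ∀ v ∈ S j,
          ‖restrictTo (R j) (fun i => f i + ε i ω) - fhat j ω‖ ≤
            ‖restrictTo (R j) (fun i => f i + ε i ω) - v‖) →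
      ∀ δ : ℝ, δ ∈ Set.Ioo (0 : ℝ) 1 →
        ENNReal.ofReal (1 - δ) ≤
          P {ω | ∑ j, ‖fhat j ω - restrictTo (R j) f‖ ^ 2 ≤
              C * σ ^ 2 * t * (r + Real.log (n / δ))} := by
  have hlog6 : 1 < Real.log 6 := by
    rw [Real.lt_log_iff_exp_lt (by norm_num : (0:ℝ) < 6)]
    have := Real.exp_one_lt_d9
    linarith
  refine ⟨32 * Real.log 6, by nlinarith, ?_⟩
  intro Ω mΩ P hP n σ hσ ε hmeas hind hsub t r R hdisj S hSr f hf fhat hfhatmem hfhatmin δ hδ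
  obtain ⟨hδ0, hδ1⟩ := hδ
  rcases Nat.eq_zero_or_pos n with hn | hn
  · -- degenerate case n = 0
    subst hn
    have hset : {ω | ∑ j, ‖fhat j ω - restrictTo (R j) f‖ ^ 2 ≤
        32 * Real.log 6 * σ ^ 2 * t * (r + Real.log (((0:ℕ):ℝ) / δ))} = Set.univ := by
      ext ω
      simp only [Set.mem_setOf_eq, Set.mem_univ, iff_true]
      have hzero : ∀ j, ‖fhat j ω - restrictTo (R j) f‖ ^ 2 = 0 := by
        intro j
        have : fhat j ω - restrictTo (R j) f = 0 := by
          ext i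
          exact i.1.elim0
        rw [this]
        simp
      rw [Finset.sum_congr rfl fun j _ => hzero j, Finset.sum_const, smul_zero]
      simp only [Nat.cast_zero, zero_div, Real.log_zero, add_zero]
      positivity
    rw [hset]
    simp only [measure_univ]
    exact ENNReal.ofReal_le_one.mpr (by linarith)
  -- main case
  classical
  -- nets
  have hnet := fun j => exists_net_subspace (S j)
  choose N hNmem hNcard hNcov using hnet
  have hNcard' : ∀ j, (N j).card ≤ 6 ^ r := fun j =>
    (hNcard j).trans (Nat.pow_le_pow_right (by norm_num) (hSr j))
  -- coefficient functions
  set cf : ∀ j : Fin t, EuclideanSpace ℝ ↥(R j) → Fin n → ℝ :=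
    fun j x i => if h : i ∈ R j then x ⟨i, h⟩ else 0 with hcf
  have hsum_cf : ∀ (j : Fin t) (x : EuclideanSpace ℝ ↥(R j)) (g : Fin n → ℝ),
      ∑ i ∈ R j, cf j x i * g i = ∑ i : ↥(R j), x i * g i.1 := by
    intro j x g
    rw [← Finset.sum_coe_sort (R j) (fun i => cf j x i * g i)]
    apply Finset.sum_congr rfl
    intro i _
    simp [hcf, i.2]
  have hsq_cf : ∀ (j : Fin t) (x : EuclideanSpace ℝ ↥(R j)), ‖x‖ = 1 →
      ∑ i ∈ R j, cf j x i ^ 2 ≤ 1 := by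
    intro j x hx
    have h1 : ∑ i ∈ R j, cf j x i ^ 2 = ∑ i : ↥(R j), x i ^ 2 := by
      rw [← Finset.sum_coe_sort (R j) (fun i => cf j x i ^ 2)]
      apply Finset.sum_congr rfl
      intro i _
      simp [hcf, i.2]
    have h2 : ∑ i : ↥(R j), x i ^ 2 = 1 := by
      have := EuclideanSpace.norm_eq x
      rw [hx] at this
      have h3 : Real.sqrt (∑ i, ‖x i‖ ^ 2) = 1 := this.symm
      have h4 : (∑ i, ‖x i‖ ^ 2) = 1 := by
        have h5 := Real.sq_sqrt (show (0:ℝ) ≤ ∑ i, ‖x i‖ ^ 2 by positivity)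
        rw [h3] at h5
        simpa using h5.symm
      simpa [sq_abs, Real.norm_eq_abs] using h4
    rw [h1, h2]
  -- threshold
  set L : ℝ := Real.log (n / δ) + r * Real.log 6 with hL
  have hnδ : 1 < (n : ℝ) / δ := by
    have h1 : (1:ℝ) ≤ (n : ℝ) := by exact_mod_cast hn
    rw [lt_div_iff₀ hδ0]
    nlinarith
  have hlognδ : 0 < Real.log ((n : ℝ) / δ) := Real.log_pos hnδ
  have hL0 : 0 < L := by
    have hr0 : (0:ℝ) ≤ r := Nat.cast_nonneg r
    have : (0:ℝ) ≤ (r:ℝ) * Real.log 6 := by nlinarith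
    rw [hL]; linarith
  set s : ℝ := σ * Real.sqrt (2 * L) with hs
  have hs0 : 0 ≤ s := by positivity
  have hsq : s ^ 2 = σ ^ 2 * (2 * L) := by
    rw [hs, mul_pow, Real.sq_sqrt (by positivity)]
  have hexp : Real.exp (-(s ^ 2) / (2 * σ ^ 2)) = δ / (n * 6 ^ r) := by
    have h1 : -(s ^ 2) / (2 * σ ^ 2) = -L := by
      rw [hsq]; field_simp
    rw [h1, hL, neg_add, Real.exp_add]
    rw [Real.exp_neg, Real.exp_log (by positivity)]
    rw [Real.exp_neg, Real.exp_nat_mul, Real.exp_log (by norm_num : (0:ℝ) < 6)]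
    field_simp
  -- bad events
  set B : ∀ j : Fin t, EuclideanSpace ℝ ↥(R j) → Set Ω :=
    fun j x => {ω | s ≤ ∑ i ∈ R j, cf j x i * ε i ω} with hB
  have hBmeas : ∀ j x, MeasurableSet (B j x) := by
    intro j x
    apply measurableSet_le measurable_const
    exact Finset.measurable_sum _ fun i _ => (hmeas i).const_mul _
  set U : Set Ω := ⋃ j, ⋃ x ∈ N j, B j x with hU
  have hUmeas : MeasurableSet U :=
    MeasurableSet.iUnion fun j => (N j).measurableSet_biUnion fun x _ => hBmeas j x
  -- count of nonempty rectangles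
  have hNempty : ∀ j : Fin t, ¬ (R j).Nonempty → N j = ∅ := by
    intro j hRj
    rw [Finset.not_nonempty_iff_eq_empty] at hRj
    by_contra hNe
    obtain ⟨x, hx⟩ := Finset.nonempty_iff_ne_empty.mpr hNe
    have hx1 := (hNmem j x hx).2
    have hx0 : x = 0 := by
      ext i
      exact absurd i.2 (by simp [hRj])
    rw [hx0] at hx1
    simp at hx1
  set T := Finset.univ.filter (fun j : Fin t => (R j).Nonempty) with hT
  have hTcard : T.card ≤ n := by
    have hinj : Set.InjOn
        (fun j => if h : (R j).Nonempty then (R j).min' h else ⟨0, hn⟩) ↑T := by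
      intro j hj j' hj' heq
      by_contra hne
      have hj1 : (R j).Nonempty := by
        have := Finset.mem_coe.mp hj; rw [hT] at this; simpa using this
      have hj'1 : (R j').Nonempty := by
        have := Finset.mem_coe.mp hj'; rw [hT] at this; simpa using this
      simp only [dif_pos hj1, dif_pos hj'1] at heq
      have h1 := (R j).min'_mem hj1
      have h2 := (R j').min'_mem hj'1
      rw [heq] at h1
      exact (Finset.disjoint_left.mp (hdisj hne) h1) h2
    have := Finset.card_le_card_of_injOn
      (f := fun j => if h : (R j).Nonempty then (R j).min' h else ⟨0, hn⟩)
      (fun a _ => Finset.mem_univ _) hinj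
    simpa using this
  have hcount : ∑ j, (N j).card ≤ n * 6 ^ r := by
    calc ∑ j, (N j).card = ∑ j ∈ T, (N j).card := by
          refine (Finset.sum_subset (Finset.subset_univ T) ?_).symm
          intro j _ hj
          have : ¬ (R j).Nonempty := by
            rw [hT] at hj; simpa using hj
          rw [hNempty j this, Finset.card_empty]
      _ ≤ ∑ _j ∈ T, 6 ^ r := Finset.sum_le_sum fun j _ => hNcard' j
      _ = T.card * 6 ^ r := by rw [Finset.sum_const, smul_eq_mul]
      _ ≤ n * 6 ^ r := Nat.mul_le_mul_right _ hTcard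
  -- union bound
  have hPB : ∀ j, ∀ x ∈ N j, P (B j x) ≤ ENNReal.ofReal (δ / (n * 6 ^ r)) := by
    intro j x hx
    have := subgaussian_tail P hσ hmeas hind hsub (R j) (cf j x)
      (hsq_cf j x (hNmem j x hx).2) hs0
    rwa [hexp] at this
  have hncast : ((n * 6 ^ r : ℕ) : ℝ) = (n : ℝ) * 6 ^ r := by push_cast; ring
  have hPU : P U ≤ ENNReal.ofReal δ := by
    calc P U ≤ ∑' j, P (⋃ x ∈ N j, B j x) := measure_iUnion_le _
      _ = ∑ j, P (⋃ x ∈ N j, B j x) := tsum_fintype _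
      _ ≤ ∑ j, ∑ x ∈ N j, P (B j x) :=
          Finset.sum_le_sum fun j _ => measure_biUnion_finset_le _ _
      _ ≤ ∑ j, ∑ _x ∈ N j, ENNReal.ofReal (δ / (n * 6 ^ r)) :=
          Finset.sum_le_sum fun j _ => Finset.sum_le_sum fun x hx => hPB j x hx
      _ = ∑ j, ((N j).card : ℝ≥0∞) * ENNReal.ofReal (δ / (n * 6 ^ r)) := by
          simp [Finset.sum_const, nsmul_eq_mul]
      _ = ((∑ j, (N j).card : ℕ) : ℝ≥0∞) * ENNReal.ofReal (δ / (n * 6 ^ r)) := by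
          rw [← Finset.sum_mul]
          congr 1
          push_cast
          rfl
      _ ≤ ((n * 6 ^ r : ℕ) : ℝ≥0∞) * ENNReal.ofReal (δ / (n * 6 ^ r)) := by
          apply mul_le_mul_left
          exact_mod_cast hcount
      _ = ENNReal.ofReal δ := by
          rw [← ENNReal.ofReal_natCast, ← ENNReal.ofReal_mul (by positivity)]
          congr 1
          rw [hncast, mul_comm, div_mul_cancel₀]
          have h6 : (0:ℝ) < (n : ℝ) * 6 ^ r := by
            have : (0:ℝ) < (n:ℝ) := by exact_mod_cast hn
            positivity
          exact h6.ne'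
  -- good event implies the bound
  have hGsub : Uᶜ ⊆ {ω | ∑ j, ‖fhat j ω - restrictTo (R j) f‖ ^ 2 ≤
      32 * Real.log 6 * σ ^ 2 * t * (r + Real.log (n / δ))} := by
    intro ω hω
    have hgood : ∀ j, ∀ x ∈ N j, ∑ i ∈ R j, cf j x i * ε i ω < s := by
      intro j x hx
      have hnot : ω ∉ B j x := fun hmem =>
        hω (Set.mem_iUnion.mpr ⟨j, Set.mem_biUnion hx hmem⟩)
      simpa [hB, not_le] using hnot
    have hbound : ∀ j, ‖fhat j ω - restrictTo (R j) f‖ ≤ 4 * s := by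
      intro j
      set w : EuclideanSpace ℝ ↥(R j) := fhat j ω - restrictTo (R j) f with hwdef
      have hw : w ∈ S j := Submodule.sub_mem _ (hfhatmem j ω) (hf j)
      set e : EuclideanSpace ℝ ↥(R j) := restrictTo (R j) (fun i => ε i ω) with hedef
      have hadd : restrictTo (R j) (fun i => f i + ε i ω) = restrictTo (R j) f + e := rfl
      have hle : ‖e - w‖ ≤ ‖e‖ := by
        have h1 := hfhatmin j ω (restrictTo (R j) f) (hf j)
        rw [hadd] at h1
        have h2 : restrictTo (R j) f + e - fhat j ω = e - w := by
          rw [hwdef]; abel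
        have h3 : restrictTo (R j) f + e - restrictTo (R j) f = e := by abel
        rwa [h2, h3] at h1
      have hkey : ‖w‖ ^ 2 ≤ 2 * (inner ℝ e w : ℝ) := by
        have hsq1 : ‖e - w‖ ^ 2 ≤ ‖e‖ ^ 2 :=
          pow_le_pow_left₀ (norm_nonneg _) hle 2
        have hexp2 := norm_sub_sq_real e w
        linarith
      set p : EuclideanSpace ℝ ↥(R j) :=
        ((S j).orthogonalProjectionOnto e : EuclideanSpace ℝ ↥(R j)) with hpdef
      have hpmem : p ∈ S j := SetLike.coe_mem _
      have hproj : ∀ u, u ∈ S j → (inner ℝ (e - p) u : ℝ) = 0 := fun u hu =>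
        by have := (S j).starProjection_inner_eq_zero e u hu; rwa [Submodule.starProjection_apply] at this
      have hew : (inner ℝ e w : ℝ) = (inner ℝ p w : ℝ) := by
        have h0 := hproj w hw
        rw [inner_sub_left] at h0
        linarith
      have hpnorm : ‖p‖ ≤ 2 * s := by
        by_cases hp0 : p = 0
        · rw [hp0, norm_zero]; linarith
        · have hpn : 0 < ‖p‖ := norm_pos_iff.mpr hp0
          set v : EuclideanSpace ℝ ↥(R j) := ‖p‖⁻¹ • p with hvdef
          have hvmem : v ∈ S j := Submodule.smul_mem _ _ hpmem
          have hvnorm : ‖v‖ = 1 := by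
            rw [hvdef, norm_smul, norm_inv, norm_norm, inv_mul_cancel₀ hpn.ne']
          obtain ⟨x, hxN, hxclose⟩ := hNcov j v hvmem hvnorm
          have hxe : (inner ℝ x e : ℝ) = ∑ i ∈ R j, cf j x i * ε i ω := by
            rw [hsum_cf j x (fun i => ε i ω)]
            simp [PiLp.inner_apply, RCLike.inner_apply, conj_trivial, hedef, restrictTo, mul_comm]
          have hxp : (inner ℝ x e : ℝ) = (inner ℝ x p : ℝ) := by
            have h0 := hproj x (hNmem j x hxN).1
            rw [inner_sub_left] at h0
            have h1 : (inner ℝ e x : ℝ) = (inner ℝ x e : ℝ) := real_inner_comm _ _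
            have h2 : (inner ℝ p x : ℝ) = (inner ℝ x p : ℝ) := real_inner_comm _ _
            linarith
          have hvp : (inner ℝ v p : ℝ) = ‖p‖ := by
            rw [hvdef, real_inner_smul_left, real_inner_self_eq_norm_sq]
            field_simp
          have hdiff : |(inner ℝ (x - v) p : ℝ)| ≤ (1/2) * ‖p‖ := by
            calc |(inner ℝ (x - v) p : ℝ)| ≤ ‖x - v‖ * ‖p‖ := abs_real_inner_le_norm _ _
              _ ≤ (1/2) * ‖p‖ := by
                  apply mul_le_mul_of_nonneg_right ?_ (norm_nonneg _)
                  rw [← norm_neg, neg_sub]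
                  linarith
          have hxp2 : ‖p‖ / 2 ≤ (inner ℝ x p : ℝ) := by
            have hsplit : (inner ℝ x p : ℝ) = (inner ℝ v p : ℝ) + (inner ℝ (x - v) p : ℝ) := by
              rw [← inner_add_left]
              congr 1
              abel
            have habs := abs_le.mp hdiff
            rw [hsplit, hvp]
            linarith [habs.1]
          have hlt := hgood j x hxN
          rw [← hxe, hxp] at hlt
          linarith
      have hpw : (inner ℝ p w : ℝ) ≤ ‖p‖ * ‖w‖ := real_inner_le_norm _ _
      have hfinal : ‖w‖ ^ 2 ≤ 2 * (2 * s) * ‖w‖ := by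
        have h1 : (inner ℝ p w : ℝ) ≤ (2 * s) * ‖w‖ :=
          hpw.trans (mul_le_mul_of_nonneg_right hpnorm (norm_nonneg _))
        calc ‖w‖ ^ 2 ≤ 2 * (inner ℝ e w : ℝ) := hkey
          _ = 2 * (inner ℝ p w : ℝ) := by rw [hew]
          _ ≤ 2 * ((2 * s) * ‖w‖) := by linarith
          _ = 2 * (2 * s) * ‖w‖ := by ring
      by_cases hw0 : ‖w‖ = 0
      · rw [hw0]; linarith
      · have hwpos : 0 < ‖w‖ := lt_of_le_of_ne (norm_nonneg _) (Ne.symm hw0)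
        have h2 : ‖w‖ * ‖w‖ ≤ (4 * s) * ‖w‖ := by
          rw [pow_two] at hfinal; linarith
        exact le_of_mul_le_mul_right h2 hwpos
    simp only [Set.mem_setOf_eq]
    calc ∑ j, ‖fhat j ω - restrictTo (R j) f‖ ^ 2
        ≤ ∑ _j : Fin t, (4 * s) ^ 2 := Finset.sum_le_sum fun j _ =>
            pow_le_pow_left₀ (norm_nonneg _) (hbound j) 2
      _ = t * (16 * (σ ^ 2 * (2 * L))) := by
          rw [Finset.sum_const, Finset.card_univ, Fintype.card_fin, nsmul_eq_mul, ← hsq]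
          ring
      _ ≤ 32 * Real.log 6 * σ ^ 2 * t * (r + Real.log (n / δ)) := by
          rw [hL]
          have ht0 : (0:ℝ) ≤ t := Nat.cast_nonneg t
          have hr0 : (0:ℝ) ≤ r := Nat.cast_nonneg r
          have key : 0 ≤ 32 * (σ ^ 2 * (t:ℝ)) * ((Real.log 6 - 1) * Real.log (n / δ)) := by
            apply mul_nonneg
            · apply mul_nonneg (by norm_num)
              exact mul_nonneg (by positivity) ht0
            · exact mul_nonneg (by linarith) hlognδ.le
          nlinarith [key]
  calc ENNReal.ofReal (1 - δ) = 1 - ENNReal.ofReal δ := by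
        rw [← ENNReal.ofReal_one, ← ENNReal.ofReal_sub _ hδ0.le]
    _ ≤ 1 - P U := tsub_le_tsub_left hPU 1
    _ = P Uᶜ := (prob_compl_eq_one_sub hUmeas).symm
    _ ≤ _ := measure_mono hGsub
end

section
/- Let b ≥ 2 and h ≥ 1 be natural numbers. Let T be a finite set of lists over Fin b such that: every list in T has length at most h; T is closed under taking prefixes; T contains at least one nonempty list; and for every x ∈ T that has some one-element extension in T, all b of the one-element extensions of x lie in T. Call x ∈ T a leaf of T if no one-element extension of x lies in T, and call x ∈ T a terminal node of T if all b one-element extensions of x lie in T and are leaves of T. If s is the number of terminal nodes of T, then the number of leaves of T is at most b·s·(h+1). -/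
/-- `x` is a leaf of the tree `T`: it belongs to `T` but no one-element extension does. -/
def IsLeaf {b : ℕ} (T : Finset (List (Fin b))) (x : List (Fin b)) : Prop :=
  x ∈ T ∧ ∀ c : Fin b, x ++ [c] ∉ T

/-- `x` is a terminal node of the tree `T`: it belongs to `T` and all `b` of its one-element
extensions lie in `T` and are leaves of `T`. -/
def IsTerminal {b : ℕ} (T : Finset (List (Fin b))) (x : List (Fin b)) : Prop :=
  x ∈ T ∧ ∀ c : Fin b, IsLeaf T (x ++ [c])

/-- Lemma 3.4 of the paper, combinatorial form: in a complete `b`-ary subtree of depth at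
most `h` (nodes are lists over `Fin b`, children are one-element extensions) containing at
least one nonempty list, the number of leaves is at most `b·s·(h+1)`, where `s` is the
number of terminal nodes. -/
theorem leaves_le_terminal_nodes
    (b h : ℕ) (hb : 2 ≤ b) (hh : 1 ≤ h) (T : Finset (List (Fin b)))
    (hlen : ∀ x ∈ T, x.length ≤ h)
    (hpre : ∀ x ∈ T, ∀ y : List (Fin b), y <+: x → y ∈ T)
    (hne : ∃ x ∈ T, x ≠ [])
    (hsib : ∀ x ∈ T, (∃ c : Fin b, x ++ [c] ∈ T) → ∀ c : Fin b, x ++ [c] ∈ T) :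
    {x : List (Fin b) | IsLeaf T x}.ncard ≤
      b * {x : List (Fin b) | IsTerminal T x}.ncard * (h + 1) := by
  classical
  -- every internal node has a terminal descendant
  have key : ∀ n (y : List (Fin b)), h - y.length ≤ n → y ∈ T →
      (∃ c : Fin b, y ++ [c] ∈ T) → ∃ t, IsTerminal T t ∧ y <+: t := by
    intro n
    induction n with
    | zero =>
      intro y hy hyT ⟨c, hc⟩
      have := hlen _ hc
      simp at this
      omega
    | succ n ih =>
      intro y hy hyT hc
      have hall : ∀ c : Fin b, y ++ [c] ∈ T := hsib y hyT hc
      by_cases hdeep : ∃ c c' : Fin b, (y ++ [c]) ++ [c'] ∈ T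
      · obtain ⟨c, c', hcc⟩ := hdeep
        have hlen2 := hlen _ hcc
        simp at hlen2
        obtain ⟨t, ht, hpr⟩ := ih (y ++ [c]) (by simp; omega) (hall c) ⟨c', hcc⟩
        exact ⟨t, ht, ((y.prefix_append [c]).trans hpr)⟩
      · push_neg at hdeep
        exact ⟨y, ⟨hyT, fun c => ⟨hall c, fun c' => hdeep c c'⟩⟩, List.prefix_refl y⟩
  -- choice function for terminal descendants
  set g : List (Fin b) → List (Fin b) := fun y =>
    if hy : y ∈ T ∧ ∃ c : Fin b, y ++ [c] ∈ T then
      (key h y (by omega) hy.1 hy.2).choose else []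
  have hg : ∀ y, y ∈ T → (∃ c : Fin b, y ++ [c] ∈ T) →
      IsTerminal T (g y) ∧ y <+: g y := by
    intro y h1 h2
    simp only [g, dif_pos (⟨h1, h2⟩ : y ∈ T ∧ ∃ c : Fin b, y ++ [c] ∈ T)]
    exact (key h y (by omega) h1 h2).choose_spec
  set L : Finset (List (Fin b)) := T.filter (fun x => IsLeaf T x) with hL
  set S : Finset (List (Fin b)) := T.filter (fun x => IsTerminal T x) with hS
  have hLset : {x : List (Fin b) | IsLeaf T x} = ↑L := by
    ext x
    simp only [Set.mem_setOf_eq, Finset.coe_filter, Set.mem_setOf_eq, hL, Finset.mem_filter]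
    exact ⟨fun hl => ⟨hl.1, hl⟩, fun hl => hl.2⟩
  have hSset : {x : List (Fin b) | IsTerminal T x} = ↑S := by
    ext x
    simp only [Set.mem_setOf_eq, Finset.coe_filter, Set.mem_setOf_eq, hS, Finset.mem_filter]
    exact ⟨fun hl => ⟨hl.1, hl⟩, fun hl => hl.2⟩
  rw [hLset, hSset, Set.ncard_coe_finset, Set.ncard_coe_finset]
  -- leaves are nonempty
  have hroot : ([] : List (Fin b)) ∈ T := by
    obtain ⟨x0, hx0, _⟩ := hne
    exact hpre x0 hx0 [] (List.nil_prefix)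
  have hleaf_ne : ∀ x ∈ L, x ≠ [] := by
    intro x hx hxe
    obtain ⟨x0, hx0, hx0ne⟩ := hne
    simp only [hL, Finset.mem_filter] at hx
    cases x0 with
    | nil => exact hx0ne rfl
    | cons a rest =>
      have : [a] ∈ T := hpre _ hx0 [a] ⟨rest, rfl⟩
      exact hx.2.2 a (by simpa [hxe] using this)
  have hd : 0 < b := by omega
  let d : Fin b := ⟨0, hd⟩
  -- the injection
  have hcard : L.card ≤ (S ×ˢ (Finset.range (h+1) ×ˢ (Finset.univ : Finset (Fin b)))).card := by
    apply Finset.card_le_card_of_injOn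
      (fun x => (g x.dropLast, x.dropLast.length, x.getLastD d))
    · intro x hx
      have hxne := hleaf_ne x hx
      simp only [Finset.mem_coe, hL, Finset.mem_filter] at hx
      have hyT : x.dropLast ∈ T := hpre x hx.1 _ (List.dropLast_prefix x)
      have hchild : x.dropLast ++ [x.getLast hxne] ∈ T := by
        rw [List.dropLast_append_getLast hxne]; exact hx.1
      obtain ⟨ht, _⟩ := hg x.dropLast hyT ⟨_, hchild⟩
      simp only [Finset.mem_coe, Finset.mem_product, Finset.mem_range, Finset.mem_univ, and_true, hS,
        Finset.mem_filter]
      refine ⟨⟨ht.1, ht⟩, ?_⟩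
      have := hlen x hx.1
      have := x.length_dropLast
      omega
    · intro x1 hx1 x2 hx2 heq
      rw [Finset.mem_coe] at hx1 hx2
      have h1ne := hleaf_ne x1 hx1
      have h2ne := hleaf_ne x2 hx2
      simp only [hL, Finset.mem_filter] at hx1 hx2
      simp only [Prod.mk.injEq] at heq
      obtain ⟨hgeq, hleq, hlast⟩ := heq
      have hy1T : x1.dropLast ∈ T := hpre x1 hx1.1 _ (List.dropLast_prefix x1)
      have hy2T : x2.dropLast ∈ T := hpre x2 hx2.1 _ (List.dropLast_prefix x2)
      have hc1 : x1.dropLast ++ [x1.getLast h1ne] ∈ T := by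
        rw [List.dropLast_append_getLast h1ne]; exact hx1.1
      have hc2 : x2.dropLast ++ [x2.getLast h2ne] ∈ T := by
        rw [List.dropLast_append_getLast h2ne]; exact hx2.1
      obtain ⟨_, hp1⟩ := hg x1.dropLast hy1T ⟨_, hc1⟩
      obtain ⟨_, hp2⟩ := hg x2.dropLast hy2T ⟨_, hc2⟩
      rw [hgeq] at hp1
      have hyeq : x1.dropLast = x2.dropLast := by
        rw [List.prefix_iff_eq_take] at hp1 hp2
        rw [hleq] at hp1
        exact hp1.trans hp2.symm
      have hl1 : x1.getLastD d = x1.getLast h1ne := by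
        conv_lhs => rw [← List.dropLast_append_getLast h1ne]
        exact List.getLastD_concat
      have hl2 : x2.getLastD d = x2.getLast h2ne := by
        conv_lhs => rw [← List.dropLast_append_getLast h2ne]
        exact List.getLastD_concat
      calc x1 = x1.dropLast ++ [x1.getLast h1ne] := (List.dropLast_append_getLast h1ne).symm
        _ = x2.dropLast ++ [x2.getLast h2ne] := by
            rw [hyeq, ← hl1, ← hl2, hlast]
        _ = x2 := List.dropLast_append_getLast h2ne
  calc L.card ≤ (S ×ˢ (Finset.range (h+1) ×ˢ (Finset.univ : Finset (Fin b)))).card := hcard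
    _ = S.card * ((h+1) * b) := by simp [Finset.card_product]
    _ = b * S.card * (h+1) := by ring
end
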